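/- arXiv:2505.12918 — 6 statements merged into one kernel-verified Lean document; each statement's English description precedes it below -/
import Mathlib

section
/- The group IA(N) of all IA-automorphisms of N is abelian and torsion-free: α β = β α for all α, β ∈ IA(N), and if α ∈ IA(N) satisfies αⁿ = id for some integer n ≥ 1, then α = id. -/
/-!
Setting: `X` is an infinite set, `F` the free group on `X`, and
`N X = F/γ₃(F)` the free nilpotent group of class two on `X`.
-/

namespace FreeNilp

/-- The free nilpotent group of class two on `X`:  `F/γ₃(F)`, where
`γ₃(F) = [[F,F],F]` is the third term of the lower central series of `F`. -/
abbrev N (X : Type*) := FreeGroup X ⧸ (⊤ : Subgroup (FreeGroup X)).lowerCentralSeries 2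

/-- The image in `N X` of the generator `x ∈ X`. -/
def xb {X : Type*} (x : X) : N X := QuotientGroup.mk (FreeGroup.of x)

/-- The group of inner automorphisms `Inn G`, as a subgroup of `MulAut G`;
`MulAut.conj z` is the inner automorphism `τ_z : a ↦ z a z⁻¹`. -/
def Inn (G : Type*) [Group G] : Subgroup (MulAut G) := (MulAut.conj (G := G)).range

instance Inn.normal (G : Type*) [Group G] : (Inn G).Normal := by
  constructor
  rintro m ⟨z, rfl⟩ g
  refine ⟨g z, ?_⟩
  ext a
  simp [MulAut.conj_apply, map_mul, map_inv, mul_assoc]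

/-- The outer automorphism group `Out G = Aut G / Inn G`. -/
abbrev Out (G : Type*) [Group G] := MulAut G ⧸ Inn G

/-- The quotient homomorphism `ĥ : Aut G → Out G`. -/
def hhat (G : Type*) [Group G] : MulAut G →* Out G := QuotientGroup.mk' (Inn G)

/-- IA-automorphisms: automorphisms inducing the identity on the abelianization. -/
def IA {G : Type*} [Group G] (α : MulAut G) : Prop :=
  ∀ g : G, Abelianization.of (α g) = Abelianization.of g

/-- A-symmetries in `Aut G`: automorphisms inducing the inversion automorphism
`-id : a ↦ a⁻¹` of the abelianization. -/
def ASym {G : Type*} [Group G] (θ : MulAut G) : Prop :=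
  ∀ g : G, Abelianization.of (θ g) = (Abelianization.of g)⁻¹

/-- A-symmetries in `Out G`: elements induced by A-symmetries of `Aut G`
(equivalently, inducing inversion on the abelianization). -/
def ASymO {G : Type*} [Group G] (t : Out G) : Prop :=
  ∃ θ : MulAut G, hhat G θ = t ∧ ASym θ

/-- The endomorphism of the abelianization induced by an automorphism of `G`. -/
def abMap {G : Type*} [Group G] (σ : MulAut G) : Abelianization G →* Abelianization G :=
  Abelianization.map σ.toMonoidHom

/-- `S` is a free generating set (a "ℤ-basis", written multiplicatively) of the abelian
group `H`:  `S` generates `H`, and every `ℤ`-valued function on `S` extends to a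
homomorphism `H → ℤ` (the universal property of a free abelian group with basis `S`). -/
def IsFreeAbelianBasisOf {G : Type*} [Group G] (S : Set G) (H : Subgroup G) : Prop :=
  Subgroup.closure S = H ∧
    ∀ g : G → ℤ, ∃ φ : H →* Multiplicative ℤ,
      ∀ s, s ∈ S → ∀ h : s ∈ H, φ ⟨s, h⟩ = Multiplicative.ofAdd (g s)

/-- `σ : Aut (N X)` induces an extremal involution of the abelianization `A`:
for some free generating set `{a} ∪ C` of `A` the induced map sends `a` to `a⁻¹`
and fixes `C` pointwise. -/
def AExtremal {G : Type*} [Group G] (σ : MulAut G) : Prop :=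
  ∃ (a : Abelianization G) (C : Set (Abelianization G)),
    a ∉ C ∧ IsFreeAbelianBasisOf (insert a C) ⊤ ∧
      abMap σ a = a⁻¹ ∧ ∀ c ∈ C, abMap σ c = c

/-- A basis (free generating set) of `N X`: the image of the canonical generating set
`{x̄ : x ∈ X}` under an automorphism of `N X`. -/
def IsBasisN {X : Type*} (B : Set (N X)) : Prop :=
  ∃ e : MulAut (N X), B = ⇑e '' Set.range (xb : X → N X)

/-- Extremal involutions in `Aut (N X)`: automorphisms inverting one element of some
basis of `N X` and fixing all the other elements of that basis. -/
def IsExtremalAut {X : Type*} (ψ : MulAut (N X)) : Prop :=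
  ∃ B : Set (N X), IsBasisN B ∧
    ∃ b₀ ∈ B, ψ b₀ = b₀⁻¹ ∧ ∀ b ∈ B, b ≠ b₀ → ψ b = b

/-- The subgroup `G_b = {s ∈ Out (N X) : s̄(b̄N') = b̄N'}` of `Out (N X)`, as a set:
outer automorphisms whose induced automorphism of the abelianization fixes the image
of the generator `b`. -/
def Gb {X : Type*} (b : X) : Set (Out (N X)) :=
  {s | ∀ σ : MulAut (N X), hhat (N X) σ = s →
    Abelianization.of (σ (xb b)) = Abelianization.of (xb b)}

end FreeNilp

open FreeNilp

open scoped commutatorElement IsMulCommutative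

section Stmt3Aux

open Subgroup FreeNilp

variable {X : Type*}

private lemma mk_comm (w v : FreeGroup X) :
    (QuotientGroup.mk ⁅w, v⁆ : N X) = ⁅(QuotientGroup.mk w : N X), QuotientGroup.mk v⁆ := by
  exact map_commutatorElement (QuotientGroup.mk' _) w v

private lemma comm_le_center : commutator (N X) ≤ Subgroup.center (N X) := by
  rw [_root_.commutator_def, Subgroup.commutator_le]
  intro p _ q _
  obtain ⟨w, rfl⟩ := QuotientGroup.mk_surjective p
  obtain ⟨v, rfl⟩ := QuotientGroup.mk_surjective q
  rw [Subgroup.mem_center_iff]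
  intro g
  obtain ⟨u, rfl⟩ := QuotientGroup.mk_surjective g
  have h1 : (QuotientGroup.mk ⁅⁅w, v⁆, u⁆ : N X) = 1 := by
    rw [QuotientGroup.eq_one_iff]
    exact Subgroup.commutator_mem_commutator
      (Subgroup.commutator_mem_commutator (Subgroup.mem_top w) (Subgroup.mem_top v))
      (Subgroup.mem_top u)
  rw [mk_comm, mk_comm] at h1
  exact (commutatorElement_eq_one_iff_mul_comm.mp h1).symm

private lemma comm_central (x : N X) (hx : x ∈ commutator (N X)) (g : N X) :
    x * g = g * x :=
  (Subgroup.mem_center_iff.mp (comm_le_center hx) g).symm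

private lemma comm_mul_left (a₁ a₂ b : N X) : ⁅a₁ * a₂, b⁆ = ⁅a₁, b⁆ * ⁅a₂, b⁆ := by
  have hc : ∀ g : N X, ⁅a₂, b⁆ * g = g * ⁅a₂, b⁆ := fun g =>
    comm_central _ (Subgroup.commutator_mem_commutator (Subgroup.mem_top _) (Subgroup.mem_top _)) g
  have e1 : ⁅a₁ * a₂, b⁆ = a₁ * ⁅a₂, b⁆ * a₁⁻¹ * ⁅a₁, b⁆ := by
    simp only [commutatorElement_def]; group
  rw [e1, ← hc a₁, mul_inv_cancel_right, hc ⁅a₁, b⁆]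

private lemma comm_mul_right (a b₁ b₂ : N X) : ⁅a, b₁ * b₂⁆ = ⁅a, b₁⁆ * ⁅a, b₂⁆ := by
  have hc : ∀ g : N X, ⁅a, b₂⁆ * g = g * ⁅a, b₂⁆ := fun g =>
    comm_central _ (Subgroup.commutator_mem_commutator (Subgroup.mem_top _) (Subgroup.mem_top _)) g
  have e1 : ⁅a, b₁ * b₂⁆ = ⁅a, b₁⁆ * (b₁ * ⁅a, b₂⁆ * b₁⁻¹) := by
    simp only [commutatorElement_def]; group
  rw [e1, ← hc b₁, mul_inv_cancel_right]

private lemma comm_one_left (b : N X) : ⁅(1 : N X), b⁆ = 1 := by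
  simp [commutatorElement_def]

private lemma comm_one_right (a : N X) : ⁅a, (1 : N X)⁆ = 1 := by
  simp [commutatorElement_def]

private lemma comm_inv_left (a b : N X) : ⁅a⁻¹, b⁆ = ⁅a, b⁆⁻¹ := by
  have h := (comm_mul_left a a⁻¹ b).symm
  rw [mul_inv_cancel, comm_one_left] at h
  exact (inv_eq_of_mul_eq_one_right h).symm

private lemma comm_inv_right (a b : N X) : ⁅a, b⁻¹⁆ = ⁅a, b⁆⁻¹ := by
  have h := (comm_mul_right a b b⁻¹).symm
  rw [mul_inv_cancel, comm_one_right] at h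
  exact (inv_eq_of_mul_eq_one_right h).symm

/-- A concrete model of a class-213 nilpotent group. -/
@[ext]
structure Msp (X : Type*) where
  a : X →₀ ℤ
  q : X × X →₀ ℤ

variable [LinearOrder X]

noncomputable def om : (X →₀ ℤ) →ₗ[ℤ] (X →₀ ℤ) →ₗ[ℤ] ((X × X) →₀ ℤ) :=
  Finsupp.lsum ℤ fun x => LinearMap.toSpanSingleton ℤ _
    (Finsupp.lsum ℤ fun y => LinearMap.toSpanSingleton ℤ _
      (if x < y then Finsupp.single (x, y) 1 else 0))

private lemma om_single_single (x y : X) :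
    om (Finsupp.single x (1 : ℤ)) (Finsupp.single y (1 : ℤ)) =
      (if x < y then Finsupp.single (x, y) 1 else 0) := by
  simp [om, Finsupp.lsum_single, LinearMap.toSpanSingleton_apply]

noncomputable instance : One (Msp X) := ⟨⟨0, 0⟩⟩
noncomputable instance : Mul (Msp X) := ⟨fun u v => ⟨u.a + v.a, u.q + v.q + om u.a v.a⟩⟩
noncomputable instance : Inv (Msp X) := ⟨fun u => ⟨-u.a, -u.q + om u.a u.a⟩⟩

@[simp] private lemma Msp.mul_a (u v : Msp X) : (u * v).a = u.a + v.a := rfl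
@[simp] private lemma Msp.mul_q (u v : Msp X) : (u * v).q = u.q + v.q + om u.a v.a := rfl
@[simp] private lemma Msp.one_a : (1 : Msp X).a = 0 := rfl
@[simp] private lemma Msp.one_q : (1 : Msp X).q = 0 := rfl
@[simp] private lemma Msp.inv_a (u : Msp X) : (u⁻¹).a = -u.a := rfl
@[simp] private lemma Msp.inv_q (u : Msp X) : (u⁻¹).q = -u.q + om u.a u.a := rfl

noncomputable instance : Group (Msp X) :=
  Group.ofLeftAxioms
    (fun u v w => by
      refine Msp.ext ?_ ?_
      · show u.a + v.a + w.a = u.a + (v.a + w.a)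
        rw [add_assoc]
      · show u.q + v.q + om u.a v.a + w.q + om (u.a + v.a) w.a
            = u.q + (v.q + w.q + om v.a w.a) + om u.a (v.a + w.a)
        simp only [map_add, LinearMap.add_apply]
        abel)
    (fun u => by
      refine Msp.ext ?_ ?_
      · show 0 + u.a = u.a
        rw [zero_add]
      · show 0 + u.q + om 0 u.a = u.q
        simp only [map_zero, LinearMap.zero_apply, zero_add, add_zero])
    (fun u => by
      refine Msp.ext ?_ ?_
      · show -u.a + u.a = 0
        rw [neg_add_cancel]
      · show -u.q + om u.a u.a + u.q + om (-u.a) u.a = 0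
        simp only [map_neg, LinearMap.neg_apply]
        abel)

private lemma Msp.central (u : Msp X) (h : u.a = 0) (w : Msp X) : u * w = w * u := by
  ext
  · simp [h, add_comm]
  · simp only [Msp.mul_q, h, map_zero, LinearMap.zero_apply, add_zero]
    abel

private lemma Msp.comm_a (u v : Msp X) : (⁅u, v⁆).a = 0 := by
  simp only [commutatorElement_def, Msp.mul_a, Msp.inv_a]
  abel

private lemma Msp.comm_q (u v : Msp X) : (⁅u, v⁆).q = om u.a v.a - om v.a u.a := by
  simp only [commutatorElement_def, Msp.mul_a, Msp.mul_q, Msp.inv_a, Msp.inv_q,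
    map_add, map_neg, LinearMap.add_apply, LinearMap.neg_apply]
  abel

private lemma Msp.pow_eval (q : (X × X) →₀ ℤ) (n : ℕ) :
    (⟨0, q⟩ : Msp X) ^ n = ⟨0, n • q⟩ := by
  induction n with
  | zero =>
    rw [pow_zero, zero_smul]
    rfl
  | succ n ih =>
    rw [pow_succ, ih]
    ext
    · simp
    · simp [succ_nsmul]

noncomputable def phi0 : FreeGroup X →* Msp X :=
  FreeGroup.lift fun x => ⟨Finsupp.single x 1, 0⟩

noncomputable def pr1 : Msp X →* Multiplicative (X →₀ ℤ) where
  toFun u := Multiplicative.ofAdd u.a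
  map_one' := rfl
  map_mul' u v := rfl

private lemma phi0_a_zero {g : FreeGroup X}
    (hg : g ∈ (⁅(⊤ : Subgroup (FreeGroup X)), (⊤ : Subgroup (FreeGroup X))⁆ :
      Subgroup (FreeGroup X))) : ((phi0 g : Msp X)).a = 0 := by
  have hle : (⁅(⊤ : Subgroup (FreeGroup X)), ⊤⁆ : Subgroup (FreeGroup X)) ≤
      ((pr1 (X := X)).comp phi0).ker :=
    Subgroup.commutator_le.mpr fun p _ q _ => by
      rw [MonoidHom.mem_ker, map_commutatorElement, commutatorElement_eq_one_iff_mul_comm]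
      exact mul_comm _ _
  have h := hle hg
  rw [MonoidHom.mem_ker, MonoidHom.comp_apply] at h
  exact ofAdd_eq_one.mp h

private lemma hker :
    (⊤ : Subgroup (FreeGroup X)).lowerCentralSeries 2 ≤ (phi0 (X := X)).ker := by
  show (⁅(⁅(⊤ : Subgroup (FreeGroup X)), ⊤⁆ : Subgroup (FreeGroup X)), ⊤⁆ : Subgroup (FreeGroup X)) ≤ _
  rw [Subgroup.commutator_le]
  intro g₁ h₁ g₂ _
  rw [MonoidHom.mem_ker, map_commutatorElement, commutatorElement_eq_one_iff_mul_comm]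
  exact Msp.central _ (phi0_a_zero h₁) _

noncomputable def Phi : N X →* Msp X :=
  QuotientGroup.lift _ phi0 hker

private lemma Phi_xb (x : X) : Phi (xb x) = (⟨Finsupp.single x 1, 0⟩ : Msp X) := by
  show Phi (QuotientGroup.mk (FreeGroup.of x)) = _
  show phi0 (FreeGroup.of x) = _
  exact FreeGroup.lift_apply_of

noncomputable def cgen (p : X × X) : Subgroup.center (N X) :=
  ⟨⁅xb p.1, xb p.2⁆,
    comm_le_center (Subgroup.commutator_mem_commutator (Subgroup.mem_top _) (Subgroup.mem_top _))⟩

noncomputable def psi0 : ((X × X) →₀ ℤ) →+ Additive (Subgroup.center (N X)) :=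
  Finsupp.liftAddHom fun p => zmultiplesHom _ (Additive.ofMul (cgen p))

noncomputable def psi (q : (X × X) →₀ ℤ) : N X :=
  ((Additive.toMul (psi0 q) : Subgroup.center (N X)) : N X)

private lemma psi_add (q r : (X × X) →₀ ℤ) : psi (q + r) = psi q * psi r := by
  simp [psi, map_add]

private lemma psi_zero : psi (0 : (X × X) →₀ ℤ) = 1 := by
  simp [psi, map_zero]

private lemma psi_neg (q : (X × X) →₀ ℤ) : psi (-q) = (psi q)⁻¹ := by
  simp [psi, map_neg]

private lemma psi_sub (q r : (X × X) →₀ ℤ) : psi (q - r) = psi q * (psi r)⁻¹ := by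
  rw [sub_eq_add_neg, psi_add, psi_neg]

private lemma psi_single (p : X × X) (n : ℤ) :
    psi (Finsupp.single p n) = ⁅xb p.1, xb p.2⁆ ^ n := by
  simp [psi, psi0, Finsupp.liftAddHom_apply_single, cgen]

noncomputable def piA (g : N X) : X →₀ ℤ := (Phi g).a

private lemma piA_mul (g h : N X) : piA (g * h) = piA g + piA h := by
  simp [piA, map_mul]

private lemma piA_one : piA (1 : N X) = 0 := by simp [piA, map_one]

private lemma piA_inv (g : N X) : piA g⁻¹ = -piA g := by
  simp [piA, map_inv]

private lemma piA_xb (x : X) : piA (xb x) = Finsupp.single x 1 := by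
  rw [piA, Phi_xb]

private lemma closure_xb : Subgroup.closure (Set.range (xb : X → N X)) = ⊤ := by
  have h1 : Set.range (xb : X → N X) =
      (QuotientGroup.mk' ((⊤ : Subgroup (FreeGroup X)).lowerCentralSeries 2)) '' Set.range FreeGroup.of := by
    rw [← Set.range_comp]; rfl
  rw [h1, ← MonoidHom.map_closure, FreeGroup.closure_range_of, ← MonoidHom.range_eq_map]
  exact MonoidHom.range_eq_top_of_surjective _ (QuotientGroup.mk'_surjective _)

private lemma key (a b : N X) :
    psi (om (piA a) (piA b) - om (piA b) (piA a)) = ⁅a, b⁆ := by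
  have ha : a ∈ Subgroup.closure (Set.range (xb : X → N X)) := by
    rw [closure_xb]; trivial
  have hb : b ∈ Subgroup.closure (Set.range (xb : X → N X)) := by
    rw [closure_xb]; trivial
  induction ha, hb using Subgroup.closure_induction₂ with
  | mem x y hx hy =>
    obtain ⟨x₀, rfl⟩ := hx
    obtain ⟨y₀, rfl⟩ := hy
    rw [piA_xb, piA_xb, om_single_single, om_single_single]
    rcases lt_trichotomy x₀ y₀ with h | h | h
    · rw [if_pos h, if_neg (asymm h), sub_zero, psi_single, zpow_one]
    · subst h
      rw [if_neg (lt_irrefl x₀), sub_zero, psi_zero]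
      exact (commutatorElement_eq_one_iff_mul_comm.mpr rfl).symm
    · rw [if_neg (asymm h), if_pos h, zero_sub, psi_neg, psi_single, zpow_one,
        commutatorElement_inv]
  | one_left x hx =>
    rw [piA_one]
    simp only [map_zero, LinearMap.zero_apply, sub_zero, psi_zero]
    exact (comm_one_left x).symm
  | one_right x hx =>
    rw [piA_one]
    simp only [map_zero, LinearMap.zero_apply, zero_sub, neg_zero, psi_zero]
    exact (comm_one_right x).symm
  | mul_left x y z hx hy hz ih1 ih2 =>
    simp only [piA_mul, map_add, LinearMap.add_apply]
    rw [show om (piA x) (piA z) + om (piA y) (piA z) - (om (piA z) (piA x) + om (piA z) (piA y))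
          = (om (piA x) (piA z) - om (piA z) (piA x)) + (om (piA y) (piA z) - om (piA z) (piA y))
        from by abel,
      psi_add, ih1, ih2, comm_mul_left]
  | mul_right y z x hy hz hx ih1 ih2 =>
    simp only [piA_mul, map_add, LinearMap.add_apply]
    rw [show om (piA x) (piA y) + om (piA x) (piA z) - (om (piA y) (piA x) + om (piA z) (piA x))
          = (om (piA x) (piA y) - om (piA y) (piA x)) + (om (piA x) (piA z) - om (piA z) (piA x))
        from by abel,
      psi_add, ih1, ih2, comm_mul_right]
  | inv_left x y hx hy ih =>
    simp only [piA_inv, map_neg, LinearMap.neg_apply]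
    rw [show -om (piA x) (piA y) - -om (piA y) (piA x)
          = -(om (piA x) (piA y) - om (piA y) (piA x)) from by abel,
      psi_neg, ih, comm_inv_left]
  | inv_right x y hx hy ih =>
    simp only [piA_inv, map_neg, LinearMap.neg_apply]
    rw [show -(om (piA x)) (piA y) - -(om (piA y)) (piA x)
          = -(om (piA x) (piA y) - om (piA y) (piA x)) from by abel,
      psi_neg, ih, comm_inv_right]

private lemma rep (y : N X) (hy : y ∈ commutator (N X)) :
    (Phi y).a = 0 ∧ psi ((Phi y).q) = y := by
  rw [commutator_eq_closure] at hy
  induction hy using Subgroup.closure_induction with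
  | mem x hx =>
    obtain ⟨a, b, rfl⟩ := hx
    have hmap : Phi ⁅a, b⁆ = ⁅Phi a, Phi b⁆ := map_commutatorElement _ _ _
    constructor
    · rw [hmap, Msp.comm_a]
    · rw [hmap, Msp.comm_q]
      exact key a b
  | one =>
    refine ⟨by simp, ?_⟩
    rw [map_one]
    show psi (0 : (X × X) →₀ ℤ) = 1
    exact psi_zero
  | mul x y hx hy ihx ihy =>
    refine ⟨by simp [ihx.1, ihy.1], ?_⟩
    rw [map_mul, Msp.mul_q, ihx.1]
    simp only [map_zero, LinearMap.zero_apply, add_zero]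
    rw [psi_add, ihx.2, ihy.2]
  | inv x hx ihx =>
    refine ⟨by simp [ihx.1], ?_⟩
    rw [map_inv, Msp.inv_q, ihx.1]
    simp only [map_zero, LinearMap.zero_apply, add_zero]
    rw [psi_neg, ihx.2]

private lemma comm_tf (x : N X) (hx : x ∈ commutator (N X)) (n : ℕ) (hn : 1 ≤ n)
    (hpow : x ^ n = 1) : x = 1 := by
  obtain ⟨ha, hq⟩ := rep x hx
  have h1 : (Phi x) ^ n = 1 := by rw [← map_pow, hpow, map_one]
  have h2 : Phi x = (⟨0, (Phi x).q⟩ : Msp X) := by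
    rw [← ha]
  rw [h2, Msp.pow_eval] at h1
  have h3 : n • (Phi x).q = 0 := by
    have := congrArg Msp.q h1
    simpa using this
  have h4 : (Phi x).q = 0 := by
    ext p
    have h5 := DFunLike.congr_fun h3 p
    rw [Finsupp.smul_apply, Finsupp.coe_zero, Pi.zero_apply, nsmul_eq_mul] at h5
    simp only [Finsupp.coe_zero, Pi.zero_apply]
    rcases mul_eq_zero.mp h5 with h | h
    · exact absurd h (by
        have : (0:ℕ) < n := hn
        exact_mod_cast this.ne')
    · exact h
  rw [← hq, h4, psi_zero]

end Stmt3Aux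

section Stmt3IA

open Subgroup FreeNilp

variable {X : Type*}

private lemma delta_mem (α : MulAut (N X)) (hα : IA α) (g : N X) :
    g⁻¹ * α g ∈ commutator (N X) := by
  have h := hα g
  have h1 : Abelianization.of (g⁻¹ * α g) = 1 := by
    rw [map_mul, map_inv, h, inv_mul_cancel]
  exact (QuotientGroup.eq_one_iff _).mp h1

private lemma apply_eq (α : MulAut (N X)) (g : N X) : α g = g * (g⁻¹ * α g) := by
  group

private lemma fix_comm (α : MulAut (N X)) (hα : IA α) (x : N X)
    (hx : x ∈ commutator (N X)) : α x = x := by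
  rw [commutator_eq_closure] at hx
  induction hx using Subgroup.closure_induction with
  | mem x hx =>
    obtain ⟨a, b, rfl⟩ := hx
    have hda := delta_mem α hα a
    have hdb := delta_mem α hα b
    have hmap : α ⁅a, b⁆ = ⁅α a, α b⁆ := by
      simp [commutatorElement_def, map_mul, map_inv]
    rw [hmap]
    have e : ⁅α a, α b⁆ = ⁅a * (a⁻¹ * α a), b * (b⁻¹ * α b)⁆ := by
      rw [← apply_eq, ← apply_eq]
    rw [e, comm_mul_left a (a⁻¹ * α a) (b * (b⁻¹ * α b)),
      comm_mul_right a b (b⁻¹ * α b), comm_mul_right (a⁻¹ * α a) b (b⁻¹ * α b)]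
    have k1 : ⁅a, b⁻¹ * α b⁆ = 1 :=
      commutatorElement_eq_one_iff_mul_comm.mpr (comm_central _ hdb a).symm
    have k2 : ⁅a⁻¹ * α a, b⁆ = 1 :=
      commutatorElement_eq_one_iff_mul_comm.mpr (comm_central _ hda b)
    have k3 : ⁅a⁻¹ * α a, b⁻¹ * α b⁆ = 1 :=
      commutatorElement_eq_one_iff_mul_comm.mpr (comm_central _ hda _)
    rw [k1, k2, k3, mul_one, mul_one, mul_one]
  | one => exact map_one α
  | mul x y hx hy ihx ihy => rw [map_mul, ihx, ihy]
  | inv x hx ihx => rw [map_inv, ihx]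

private lemma comp_apply (σ τ : MulAut (N X)) (hσ : IA σ) (hτ : IA τ) (g : N X) :
    σ (τ g) = g * (g⁻¹ * σ g) * (g⁻¹ * τ g) := by
  conv_lhs => rw [apply_eq τ g]
  rw [map_mul, fix_comm σ hσ _ (delta_mem τ hτ g)]
  conv_lhs => rw [apply_eq σ g]

private lemma pow_formula (α : MulAut (N X)) (hα : IA α) (g : N X) (n : ℕ) :
    (α ^ n) g = g * (g⁻¹ * α g) ^ n := by
  induction n with
  | zero => simp
  | succ n ih =>
    rw [pow_succ', MulAut.mul_apply, ih, map_mul,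
      fix_comm α hα _ (Subgroup.pow_mem _ (delta_mem α hα g) n)]
    set d := g⁻¹ * α g with hdd
    rw [show α g = g * d from by rw [hdd]; group, mul_assoc, ← pow_succ']

end Stmt3IA


/-- The group `IA(N)` of IA-automorphisms of `N` is abelian and
torsion-free. -/
theorem stmt3 (X : Type*) [Infinite X] :
    (∀ α β : MulAut (N X), IA α → IA β → α * β = β * α) ∧
    (∀ (α : MulAut (N X)) (n : ℕ), IA α → 1 ≤ n → α ^ n = 1 → α = 1) := by
  letI : LinearOrder X := IsWellOrder.linearOrder WellOrderingRel
  constructor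
  · intro α β hα hβ
    ext g
    rw [MulAut.mul_apply, MulAut.mul_apply, comp_apply α β hα hβ g, comp_apply β α hβ hα g,
      mul_assoc g, mul_assoc g, comm_central _ (delta_mem β hβ g) (g⁻¹ * α g)]
  · intro α n hα hn hpow
    ext g
    have h1 : (α ^ n) g = g * (g⁻¹ * α g) ^ n := pow_formula α hα g n
    rw [hpow] at h1
    have h2 : (g⁻¹ * α g) ^ n = 1 := by
      have h3 : g = g * (g⁻¹ * α g) ^ n := h1
      exact (left_eq_mul.mp h3)
    have h4 : g⁻¹ * α g = 1 := comm_tf _ (delta_mem α hα g) n hn h2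
    show α g = (1 : MulAut (N X)) g
    rw [MulAut.one_apply, apply_eq α g, h4, mul_one]
end

section
/- Every A-symmetry in the group Out N is an involution: if t ∈ Out N is an A-symmetry, then t² = 1. -/
open FreeNilp
open scoped commutatorElement

section Aux
variable {G : Type*} [Group G]

lemma aux_shift_left (a b u : G) (hu : ∀ g, u * g = g * u) : ⁅u * a, b⁆ = ⁅a, b⁆ := by
  calc ⁅u * a, b⁆ = u * (a * b * a⁻¹) * u⁻¹ * b⁻¹ := by group
    _ = a * b * a⁻¹ * u * u⁻¹ * b⁻¹ := by rw [hu (a * b * a⁻¹)]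
    _ = ⁅a, b⁆ := by group

lemma aux_shift_right (a b v : G) (hv : ∀ g, v * g = g * v) : ⁅a, v * b⁆ = ⁅a, b⁆ := by
  rw [← commutatorElement_inv, aux_shift_left b a v hv, commutatorElement_inv]

lemma aux_comm_inv (hc : ∀ p q r : G, ⁅⁅p,q⁆,r⁆ = 1) (a b : G) :
    ⁅a⁻¹, b⁻¹⁆ = ⁅a, b⁆ := by
  have hcen : ∀ g, ⁅a,b⁆ * g = g * ⁅a,b⁆ := fun g =>
    commutatorElement_eq_one_iff_mul_comm.mp (hc a b g)
  have hab : a * b = ⁅a,b⁆ * (b * a) := by group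
  calc ⁅a⁻¹, b⁻¹⁆ = a⁻¹ * b⁻¹ * (a * b) := by group
    _ = a⁻¹ * b⁻¹ * (⁅a,b⁆ * (b * a)) := by rw [← hab]
    _ = a⁻¹ * b⁻¹ * (b * a * ⁅a,b⁆) := by rw [hcen]
    _ = ⁅a,b⁆ := by group

lemma aux_comm_central (hc : ∀ p q r : G, ⁅⁅p,q⁆,r⁆ = 1) :
    commutator G ≤ Subgroup.center G := by
  rw [commutator_def, Subgroup.commutator_le]
  intro p _ q _
  rw [Subgroup.mem_center_iff]
  intro r
  exact (commutatorElement_eq_one_iff_mul_comm.mp (hc p q r)).symm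

end Aux

/-- Every A-symmetry in the group `Out N` is an involution. -/
theorem stmt6 (X : Type*) [Infinite X] (t : Out (N X)) (ht : ASymO t) : t ^ 2 = 1 := by
  classical
  obtain ⟨θ, hθt, hθ⟩ := ht
  -- class two: every double commutator is trivial in `N X`
  have hc : ∀ p q r : N X, ⁅⁅p, q⁆, r⁆ = 1 := by
    intro p q r
    induction p using QuotientGroup.induction_on with | _ x => ?_
    induction q using QuotientGroup.induction_on with | _ y => ?_
    induction r using QuotientGroup.induction_on with | _ z => ?_
    have h1 : ⁅x, y⁆ ∈ (⊤ : Subgroup (FreeGroup X)).lowerCentralSeries 1 :=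
      Subgroup.commutator_mem_commutator (Subgroup.mem_top x) (Subgroup.mem_top y)
    have hmem : ⁅⁅x, y⁆, z⁆ ∈ (⊤ : Subgroup (FreeGroup X)).lowerCentralSeries 2 :=
      Subgroup.commutator_mem_commutator h1 (Subgroup.mem_top z)
    have := (QuotientGroup.eq_one_iff (N := (⊤ : Subgroup (FreeGroup X)).lowerCentralSeries 2)
      ⁅⁅x, y⁆, z⁆).mpr hmem
    exact this
  have hcen : commutator (N X) ≤ Subgroup.center (N X) := aux_comm_central hc
  have hker : ∀ g : N X, Abelianization.of g = 1 → g ∈ commutator (N X) := by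
    intro g h
    exact (QuotientGroup.eq_one_iff g).mp h
  -- every element `θ g * g` is central
  have hcentral : ∀ g : N X, ∀ w, (θ g * g) * w = w * (θ g * g) := by
    intro g
    have h1 : Abelianization.of (θ g * g) = 1 := by
      rw [map_mul, hθ g, inv_mul_cancel]
    have hmem := hcen (hker _ h1)
    intro w
    exact (Subgroup.mem_center_iff.mp hmem w).symm
  have hform : ∀ g : N X, θ g = (θ g * g) * g⁻¹ := by
    intro g; group
  -- θ fixes the commutator subgroup pointwise
  have hfixcomm : ∀ w ∈ commutator (N X), θ w = w := by
    intro w hw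
    rw [commutator_eq_closure] at hw
    induction hw using Subgroup.closure_induction with
    | mem x hx =>
      obtain ⟨a, b, rfl⟩ := hx
      have hmap : θ ⁅a, b⁆ = ⁅θ a, θ b⁆ := by
        simp [commutatorElement_def, map_mul, map_inv]
      rw [hmap, hform a, hform b, aux_shift_left _ _ _ (hcentral a),
        aux_shift_right _ _ _ (hcentral b), aux_comm_inv hc]
    | one => exact map_one θ
    | mul x y hx hy ihx ihy => rw [map_mul, ihx, ihy]
    | inv x hx ihx => rw [map_inv, ihx]
  -- θ ∘ θ = id
  have hsq : ∀ g : N X, θ (θ g) = g := by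
    intro g
    have hu : θ (θ g * g) = θ g * g := by
      apply hfixcomm
      apply hker
      rw [map_mul, hθ g, inv_mul_cancel]
    calc θ (θ g) = θ ((θ g * g) * g⁻¹) := by rw [← hform g]
      _ = (θ g * g) * (θ g)⁻¹ := by rw [map_mul, map_inv, hu]
      _ = (θ g * g) * g * (θ g * g)⁻¹ := by group
      _ = g * (θ g * g) * (θ g * g)⁻¹ := by rw [hcentral g g]
      _ = g := by group
  have hθ2 : θ ^ 2 = 1 := by
    ext g
    rw [pow_two]
    exact hsq g
  calc t ^ 2 = hhat (N X) (θ ^ 2) := by rw [← hθt, map_pow]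
    _ = 1 := by rw [hθ2, map_one]
end

section
/- An element s ∈ Out N lies in the image ĥ(IA(N)) of the group of IA-automorphisms under the quotient map ĥ : Aut N → Out N if and only if s is a product of two A-symmetries of Out N. -/
open FreeNilp

section Aux

variable {X : Type*}

/-- Inversion on generators of the free group. -/
def invF (X : Type*) : FreeGroup X →* FreeGroup X :=
  FreeGroup.lift fun x => (FreeGroup.of x)⁻¹

lemma invF_invF : (invF X).comp (invF X) = MonoidHom.id _ := by
  ext x
  simp [invF]

/-- Inversion as a `MulEquiv` of the free group. -/
def invE (X : Type*) : FreeGroup X ≃* FreeGroup X :=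
  MonoidHom.toMulEquiv (invF X) (invF X)
    (invF_invF) (invF_invF)

lemma invE_map :
    ((⊤ : Subgroup (FreeGroup X)).lowerCentralSeries 2).map (invE X) =
      (⊤ : Subgroup (FreeGroup X)).lowerCentralSeries 2 := by
  exact Subgroup.characteristic_iff_map_eq.mp inferInstance (invE X)

/-- The induced inversion automorphism of `N X`. -/
def theta (X : Type*) : MulAut (N X) :=
  QuotientGroup.congr _ _ (invE X) invE_map

lemma theta_asym : ASym (theta X) := by
  intro g
  have key : (Abelianization.of.comp (theta X).toMonoidHom : N X →* _)
      = invMonoidHom.comp Abelianization.of := by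
    apply QuotientGroup.monoidHom_ext
    ext x
    rfl
  exact DFunLike.congr_fun key g

lemma asym_inv {G : Type*} [Group G] {θ : MulAut G} (h : ASym θ) :
    ASym θ⁻¹ := by
  intro g
  have := h (θ⁻¹ g)
  rw [MulAut.apply_inv_self] at this
  rw [this, inv_inv]

end Aux



/-- An element `s ∈ Out N` lies in the image `ĥ(IA(N))` if and only if
`s` is a product of two A-symmetries of `Out N`. -/
theorem stmt8 (X : Type*) [Infinite X] (s : Out (N X)) :
    (∃ α : MulAut (N X), IA α ∧ hhat (N X) α = s) ↔
      ∃ t₁ t₂ : Out (N X), ASymO t₁ ∧ ASymO t₂ ∧ s = t₁ * t₂ := by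
  constructor
  · rintro ⟨α, hIA, rfl⟩
    refine ⟨hhat _ (theta X), hhat _ ((theta X)⁻¹ * α),
      ⟨theta X, rfl, theta_asym⟩, ⟨(theta X)⁻¹ * α, rfl, ?_⟩, ?_⟩
    · intro g
      show Abelianization.of ((theta X)⁻¹ (α g)) = _
      rw [asym_inv theta_asym (α g), hIA g]
    · rw [← map_mul]
      congr 1
      group
  · rintro ⟨t₁, t₂, ⟨θ₁, rfl, h₁⟩, ⟨θ₂, rfl, h₂⟩, rfl⟩
    refine ⟨θ₁ * θ₂, ?_, map_mul _ _ _⟩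
    intro g
    show Abelianization.of (θ₁ (θ₂ g)) = _
    rw [h₁ (θ₂ g), h₂ g, inv_inv]
end

section
/- Let t ∈ N with t ∉ N' satisfy φ(t) ≡ t⁻¹ (mod N'), i.e. φ(t)·t ∈ N'. Then there exist an integer m and an element c ∈ N' such that t = x̄₀^m c. -/
open FreeNilp


noncomputable section StmtNineAux

namespace StmtNineAux

variable {X : Type*}

/-- Exponent-sum homomorphism on the free group. -/
def EE : FreeGroup X →* Multiplicative (X →₀ ℤ) :=
  FreeGroup.lift fun x => Multiplicative.ofAdd (Finsupp.single x 1)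

theorem EE_of (x : X) : EE (FreeGroup.of x) = Multiplicative.ofAdd (Finsupp.single x (1 : ℤ)) :=
  FreeGroup.lift_apply_of

/-- The abelianization of the free group mapping to finsupps. -/
def RR : Abelianization (FreeGroup X) →* Multiplicative (X →₀ ℤ) where
  toFun a := Multiplicative.ofAdd (FreeAbelianGroup.toFinsupp (X := X) (Additive.ofMul a))
  map_one' := by
    show Multiplicative.ofAdd (FreeAbelianGroup.toFinsupp (X := X) 0) = 1
    rw [map_zero]; rfl
  map_mul' a b := by
    show Multiplicative.ofAdd (FreeAbelianGroup.toFinsupp (X := X)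
        (Additive.ofMul a + Additive.ofMul b)) = _
    exact congrArg Multiplicative.ofAdd
      (map_add (FreeAbelianGroup.toFinsupp (X := X)) (Additive.ofMul a : FreeAbelianGroup X) (Additive.ofMul b))

theorem EE_eq_RR_comp : (EE (X := X)) = RR.comp Abelianization.of := by
  apply FreeGroup.ext_hom
  intro x
  rw [MonoidHom.comp_apply, EE_of]
  have h2 : RR (Abelianization.of (FreeGroup.of x)) =
      Multiplicative.ofAdd (FreeAbelianGroup.toFinsupp (FreeAbelianGroup.of x)) := rfl
  rw [h2, FreeAbelianGroup.toFinsupp_of]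

theorem mem_commutator_of_EE_eq_one {w : FreeGroup X} (h : EE w = 1) :
    w ∈ commutator (FreeGroup X) := by
  have h2 : RR (Abelianization.of w) = 1 := by
    rw [← MonoidHom.comp_apply, ← EE_eq_RR_comp, h]
  have h3 : FreeAbelianGroup.toFinsupp (X := X) (Additive.ofMul (Abelianization.of w)) = 0 := h2
  have h4 : Additive.ofMul (Abelianization.of w) = (0 : FreeAbelianGroup X) := by
    have := congrArg (Finsupp.toFreeAbelianGroup (X := X)) h3
    rw [map_zero] at this
    exact (Finsupp.toFreeAbelianGroup_toFinsupp (X := X) (Additive.ofMul (Abelianization.of w))).symm.trans this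
  have h5 : Abelianization.of w = 1 := h4
  exact (QuotientGroup.eq_one_iff w).mp h5

/-- Evaluation at a coordinate, as a monoid hom on `Multiplicative (X →₀ ℤ)`. -/
def cy (y : X) : Multiplicative (X →₀ ℤ) →* Multiplicative ℤ :=
  AddMonoidHom.toMultiplicative (Finsupp.applyAddHom y)

theorem cy_ofAdd (y : X) (f : X →₀ ℤ) :
    cy y (Multiplicative.ofAdd f) = Multiplicative.ofAdd (f y) := rfl

end StmtNineAux

end StmtNineAux

open StmtNineAux in

/-- Let `φ` be the extremal involution inverting `x̄₀` and fixing all the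
other canonical generators. If `t ∈ N \ N'` satisfies `φ(t) ≡ t⁻¹ (mod N')`, then
`t = x̄₀^m c` for some `m ∈ ℤ` and `c ∈ N'`. -/
theorem stmt9 (X : Type*) [Infinite X] (x₀ : X) (φ : MulAut (N X))
    (hφ₀ : φ (xb x₀) = (xb x₀)⁻¹) (hφ : ∀ y : X, y ≠ x₀ → φ (xb y) = xb y)
    (t : N X) (ht : t ∉ commutator (N X)) (h : φ t * t ∈ commutator (N X)) :
    ∃ (m : ℤ) (c : N X), c ∈ commutator (N X) ∧ t = xb x₀ ^ m * c := by
  classical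
  set q : FreeGroup X →* N X := QuotientGroup.mk' ((⊤ : Subgroup (FreeGroup X)).lowerCentralSeries 2) with hqdef
  have hqsurj : Function.Surjective q := QuotientGroup.mk'_surjective _
  have hker : (⊤ : Subgroup (FreeGroup X)).lowerCentralSeries 2 ≤ (EE (X := X)).ker := by
    refine le_trans ?_ (Abelianization.commutator_subset_ker EE)
    rw [← Subgroup.top_lowerCentralSeries_one]
    exact Subgroup.lowerCentralSeries_antitone (S := (⊤ : Subgroup (FreeGroup X))) (by norm_num)
  set Eb : N X →* Multiplicative (X →₀ ℤ) := QuotientGroup.lift _ EE hker with hEbdef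
  have hqof : ∀ x : X, q (FreeGroup.of x) = xb x := fun _ => rfl
  have hEbq : ∀ w : FreeGroup X, Eb (q w) = EE w := fun _ => rfl
  have hEbxb : ∀ x : X, Eb (xb x) = Multiplicative.ofAdd (Finsupp.single x (1 : ℤ)) := by
    intro x
    rw [← hqof x, hEbq, EE_of]
  obtain ⟨w, hw⟩ := hqsurj t
  -- the image of the hypothesis under `Eb`
  have hEone : Eb (φ t) * Eb t = 1 := by
    have h1 : φ t * t ∈ Eb.ker := Abelianization.commutator_subset_ker Eb h
    rw [MonoidHom.mem_ker, map_mul] at h1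
    exact h1
  set a : X →₀ ℤ := Multiplicative.toAdd (Eb t) with hadef
  have hEbt : Eb t = Multiplicative.ofAdd a := rfl
  -- all coordinates other than x₀ vanish
  have hzero : ∀ y : X, y ≠ x₀ → a y = 0 := by
    intro y hy
    have hhom : (cy y).comp (Eb.comp (φ.toMonoidHom.comp q)) = (cy y).comp (Eb.comp q) := by
      apply FreeGroup.ext_hom
      intro x
      simp only [MonoidHom.comp_apply, MulEquiv.coe_toMonoidHom]
      rw [hqof x]
      by_cases hx : x = x₀
      · subst hx
        rw [hφ₀, map_inv, map_inv, hEbxb, cy_ofAdd,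
          Finsupp.single_eq_of_ne hy]
        rfl
      · rw [hφ x hx]
    have hco : cy y (Eb (φ t)) = cy y (Eb t) := by
      have := DFunLike.congr_fun hhom w
      simp only [MonoidHom.comp_apply, MulEquiv.coe_toMonoidHom] at this
      rwa [hw] at this
    have hsq : cy y (Eb (φ t)) * cy y (Eb t) = 1 := by
      rw [← map_mul, hEone, map_one]
    rw [hco, hEbt, cy_ofAdd, ← ofAdd_add] at hsq
    have : a y + a y = 0 := by
      have := congrArg Multiplicative.toAdd hsq
      simpa using this
    omega
  have ha : a = Finsupp.single x₀ (a x₀) := by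
    ext y
    by_cases hy : y = x₀
    · subst hy; rw [Finsupp.single_eq_same]
    · rw [hzero y hy, Finsupp.single_eq_of_ne hy]
  set m : ℤ := a x₀ with hmdef
  set u : FreeGroup X := FreeGroup.of x₀ ^ (-m) * w with hudef
  have hEw : EE w = Multiplicative.ofAdd a := by rw [← hEbq w, hw]; exact hEbt
  have hEu : EE u = 1 := by
    rw [hudef, map_mul, map_zpow, EE_of, hEw, ha, ← ofAdd_zsmul, ← ofAdd_add,
      Finsupp.smul_single, smul_eq_mul, mul_one, ← Finsupp.single_add]
    simp
  have hu : u ∈ commutator (FreeGroup X) := mem_commutator_of_EE_eq_one hEu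
  have hmap : (commutator (FreeGroup X)).map q = commutator (N X) := by
    rw [commutator_def, Subgroup.map_commutator, Subgroup.map_top_of_surjective q hqsurj,
      ← commutator_def]
  refine ⟨m, q u, hmap ▸ ⟨u, hu, rfl⟩, ?_⟩
  have hqu : q u = xb x₀ ^ (-m) * t := by
    rw [hudef, map_mul, map_zpow, hqof, hw]
  rw [hqu, zpow_neg]
  group
end

section
/- Let t ∈ Out N be an A-symmetry such that for every permutation ρ of X, writing π_ρ for the automorphism of N with π_ρ(x̄) = ρ(x)‾ for all x ∈ X, one has ĥ(π_ρ) t ĥ(π_ρ)⁻¹ t⁻¹ ∈ ĥ(K²), where K² = {α² : α ∈ IA(N)}. Then t is a symmetry in Out N: there exist an automorphism θ of N and a basis B of N such that θ(b) = b⁻¹ for every b ∈ B and ĥ(θ) = t. -/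
open FreeNilp

open scoped commutatorElement

open scoped IsMulCommutative

namespace Stmt14Aux

open Subgroup

/-! ### A Heisenberg-type group of class two -/

@[ext] structure Hg where
  a : ℤ
  b : ℤ
  c : ℤ

namespace Hg

instance : Mul Hg := ⟨fun g h => ⟨g.a + h.a, g.b + h.b, g.c + h.c + g.a * h.b⟩⟩
instance : One Hg := ⟨⟨0, 0, 0⟩⟩
instance : Inv Hg := ⟨fun g => ⟨-g.a, -g.b, -g.c + g.a * g.b⟩⟩

lemma mul_def (g h : Hg) : g * h = ⟨g.a + h.a, g.b + h.b, g.c + h.c + g.a * h.b⟩ := rfl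
lemma one_def : (1 : Hg) = ⟨0, 0, 0⟩ := rfl
lemma inv_def (g : Hg) : g⁻¹ = ⟨-g.a, -g.b, -g.c + g.a * g.b⟩ := rfl

lemma mul_a (g h : Hg) : (g * h).a = g.a + h.a := rfl
lemma mul_b (g h : Hg) : (g * h).b = g.b + h.b := rfl
lemma mul_c (g h : Hg) : (g * h).c = g.c + h.c + g.a * h.b := rfl
lemma inv_a (g : Hg) : (g⁻¹).a = -g.a := rfl
lemma inv_c (g : Hg) : (g⁻¹).c = -g.c + g.a * g.b := rfl
lemma one_a : (1 : Hg).a = 0 := rfl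
lemma one_c : (1 : Hg).c = 0 := rfl

instance : Group Hg where
  mul_assoc g h k := by ext <;> simp [mul_def] <;> ring
  one_mul g := by ext <;> simp [mul_def, one_def]
  mul_one g := by ext <;> simp [mul_def, one_def]
  inv_mul_cancel g := by ext <;> simp [mul_def, one_def, inv_def] <;> ring

lemma commutator_formula (g h : Hg) : ⁅g, h⁆ = ⟨0, 0, g.a * h.b - h.a * g.b⟩ := by
  ext <;> simp [commutatorElement_def, mul_def, inv_def] <;> ring

lemma class2 : ∀ g h k : Hg, ⁅⁅g, h⁆, k⁆ = 1 := by
  intro g h k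
  rw [commutator_formula, commutator_formula]
  ext <;> simp [one_def]

/-- first coordinate, as a homomorphism. -/
def aHom : Hg →* Multiplicative ℤ where
  toFun g := Multiplicative.ofAdd g.a
  map_one' := rfl
  map_mul' g h := ofAdd_add g.a h.a

/-- second coordinate, as a homomorphism. -/
def bHom : Hg →* Multiplicative ℤ where
  toFun g := Multiplicative.ofAdd g.b
  map_one' := rfl
  map_mul' g h := ofAdd_add g.b h.b

/-- the coordinate flip anti-involution (a homomorphism by class-2 magic). -/
def flipHom : Hg →* Hg where
  toFun g := ⟨g.b, g.a, g.a * g.b - g.c⟩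
  map_one' := by ext <;> simp [one_def]
  map_mul' g h := by ext <;> simp [mul_def] <;> ring

lemma flipHom_apply (g : Hg) : flipHom g = ⟨g.b, g.a, g.a * g.b - g.c⟩ := rfl

/-- elements with `a = b = 0` form a subgroup -/
def KC : Subgroup Hg where
  carrier := {g | g.a = 0 ∧ g.b = 0}
  one_mem' := ⟨rfl, rfl⟩
  mul_mem' := by rintro g h ⟨h1, h2⟩ ⟨h3, h4⟩; exact ⟨by simp [mul_def, h1, h3], by simp [mul_def, h2, h4]⟩
  inv_mem' := by rintro g ⟨h1, h2⟩; exact ⟨by simp [inv_def, h1], by simp [inv_def, h2]⟩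

/-- elements with `a = c = 0` form a subgroup -/
def KA : Subgroup Hg where
  carrier := {g | g.a = 0 ∧ g.c = 0}
  one_mem' := ⟨rfl, rfl⟩
  mul_mem' := by rintro g h ⟨h1, h2⟩ ⟨h3, h4⟩; exact ⟨by simp [mul_def, h1, h3], by simp [mul_def, h1, h2, h4]⟩
  inv_mem' := by rintro g ⟨h1, h2⟩; exact ⟨by simp [inv_def, h1], by simp [inv_def, h1, h2]⟩

/-- elements with `b = c = 0` form a subgroup -/
def KB : Subgroup Hg where
  carrier := {g | g.b = 0 ∧ g.c = 0}
  one_mem' := ⟨rfl, rfl⟩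
  mul_mem' := by rintro g h ⟨h1, h2⟩ ⟨h3, h4⟩; exact ⟨by simp [mul_def, h1, h3], by simp [mul_def, h2, h3, h4]⟩
  inv_mem' := by rintro g ⟨h1, h2⟩; exact ⟨by simp [inv_def, h1], by simp [inv_def, h1, h2]⟩

/-- the `c` coordinate on `KC`, as a homomorphism. -/
def cHom : KC →* Multiplicative ℤ where
  toFun g := Multiplicative.ofAdd g.1.c
  map_one' := rfl
  map_mul' g h := by
    have ha := g.2.1
    rw [← ofAdd_add]
    show Multiplicative.ofAdd ((g.1 * h.1).c) = _
    rw [mul_def, ha]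
    simp

lemma commutator_mem_KC {g : Hg} (hg : g ∈ commutator Hg) : g.a = 0 ∧ g.b = 0 := by
  have : commutator Hg ≤ KC := by
    rw [commutator_def, Subgroup.commutator_le]
    intro p _ q _
    rw [commutator_formula]
    exact ⟨rfl, rfl⟩
  exact this hg

lemma c_zpow {g : Hg} (hg : g.a = 0 ∧ g.b = 0) (k : ℤ) : (g ^ k).c = k * g.c := by
  have h1 : (⟨g, hg⟩ : KC) ^ k = ⟨g ^ k, KC.zpow_mem hg k⟩ := by
    ext1
    exact SubgroupClass.coe_zpow _ _
  have h2 := congrArg Multiplicative.toAdd (map_zpow cHom (⟨g, hg⟩ : KC) k)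
  rw [h1] at h2
  simpa [cHom, toAdd_zpow] using h2

end Hg

/-! ### generic class-two group lemmas -/

section Class2
variable {M : Type*} [Group M] (hM : ∀ g h k : M, ⁅⁅g, h⁆, k⁆ = 1)

lemma mem_commutator_self' (g h : M) : ⁅g, h⁆ ∈ commutator M :=
  Subgroup.commutator_mem_commutator (Subgroup.mem_top g) (Subgroup.mem_top h)

include hM

lemma commutator_le_center' : commutator M ≤ Subgroup.center M := by
  rw [commutator_def, Subgroup.commutator_le]
  intro g _ h _
  rw [Subgroup.mem_center_iff]
  intro k
  exact ((commutatorElement_eq_one_iff_commute.mp (hM g h k)).symm).eq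

lemma central_of_mem {n : M} (hn : n ∈ commutator M) (g : M) : g * n = n * g :=
  Subgroup.mem_center_iff.mp (commutator_le_center' hM hn) g

lemma comm_central {n : M} (hn : n ∈ commutator M) (g : M) : ⁅n, g⁆ = 1 :=
  commutatorElement_eq_one_iff_commute.mpr ((central_of_mem hM hn g).symm)

lemma comm_central' {n : M} (hn : n ∈ commutator M) (g : M) : ⁅g, n⁆ = 1 :=
  commutatorElement_eq_one_iff_commute.mpr (central_of_mem hM hn g)

lemma comm_mul_left' (g₁ g₂ h : M) : ⁅g₁ * g₂, h⁆ = ⁅g₁, h⁆ * ⁅g₂, h⁆ := by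
  have h1 : ⁅g₁ * g₂, h⁆ = g₁ * ⁅g₂, h⁆ * g₁⁻¹ * ⁅g₁, h⁆ := by
    simp only [commutatorElement_def]
    group
  have h2 : g₁ * ⁅g₂, h⁆ * g₁⁻¹ = ⁅g₂, h⁆ := by
    rw [central_of_mem hM (mem_commutator_self' g₂ h) g₁]
    group
  rw [h1, h2, central_of_mem hM (mem_commutator_self' g₁ h) ⁅g₂, h⁆]

lemma comm_mul_right' (g h₁ h₂ : M) : ⁅g, h₁ * h₂⁆ = ⁅g, h₁⁆ * ⁅g, h₂⁆ := by
  have h1 : ⁅g, h₁ * h₂⁆ = ⁅g, h₁⁆ * (h₁ * ⁅g, h₂⁆ * h₁⁻¹) := by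
    simp only [commutatorElement_def]
    group
  have h2 : h₁ * ⁅g, h₂⁆ * h₁⁻¹ = ⁅g, h₂⁆ := by
    rw [central_of_mem hM (mem_commutator_self' g h₂) h₁]
    group
  rw [h1, h2]

lemma comm_inv_left' (g h : M) : ⁅g⁻¹, h⁆ = ⁅g, h⁆⁻¹ := by
  have h1 : ⁅g * g⁻¹, h⁆ = ⁅g, h⁆ * ⁅g⁻¹, h⁆ := comm_mul_left' hM g g⁻¹ h
  rw [mul_inv_cancel, commutatorElement_one_left] at h1
  exact (inv_eq_of_mul_eq_one_right h1.symm).symm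

lemma comm_inv_right' (g h : M) : ⁅g, h⁻¹⁆ = ⁅g, h⁆⁻¹ := by
  have h1 : ⁅g, h * h⁻¹⁆ = ⁅g, h⁆ * ⁅g, h⁻¹⁆ := comm_mul_right' hM g h h⁻¹
  rw [mul_inv_cancel, commutatorElement_one_right] at h1
  exact (inv_eq_of_mul_eq_one_right h1.symm).symm

lemma comm_inv_inv' (g h : M) : ⁅g⁻¹, h⁻¹⁆ = ⁅g, h⁆ := by
  rw [comm_inv_left' hM, comm_inv_right' hM, inv_inv]

end Class2

open FreeNilp

variable {X : Type*}

lemma xb_eq (x : X) : xb x = QuotientGroup.mk' ((⊤ : Subgroup (FreeGroup X)).lowerCentralSeries 2) (FreeGroup.of x) := rfl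

lemma class2N : ∀ g h k : N X, ⁅⁅g, h⁆, k⁆ = 1 := by
  intro g h k
  obtain ⟨A, rfl⟩ := QuotientGroup.mk'_surjective _ g
  obtain ⟨B, rfl⟩ := QuotientGroup.mk'_surjective _ h
  obtain ⟨C, rfl⟩ := QuotientGroup.mk'_surjective _ k
  rw [← map_commutatorElement, ← map_commutatorElement]
  have hmem : ⁅⁅A, B⁆, C⁆ ∈ (⊤ : Subgroup (FreeGroup X)).lowerCentralSeries 2 := by
    have h1 : ⁅A, B⁆ ∈ (⊤ : Subgroup (FreeGroup X)).lowerCentralSeries 1 := by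
      rw [Subgroup.top_lowerCentralSeries_one]
      exact mem_commutator_self' A B
    rw [Subgroup.lowerCentralSeries_succ]
    exact Subgroup.commutator_mem_commutator h1 (Subgroup.mem_top C)
  have := (QuotientGroup.ker_mk' ((⊤ : Subgroup (FreeGroup X)).lowerCentralSeries 2)) ▸ hmem
  exact MonoidHom.mem_ker.mp this

lemma closure_range_xb : Subgroup.closure (Set.range (xb : X → N X)) = ⊤ := by
  have h : Set.range (xb : X → N X)
      = (QuotientGroup.mk' ((⊤ : Subgroup (FreeGroup X)).lowerCentralSeries 2)) '' Set.range FreeGroup.of := by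
    rw [← Set.range_comp]; rfl
  rw [h, ← MonoidHom.map_closure, FreeGroup.closure_range_of, ← MonoidHom.range_eq_map]
  exact MonoidHom.range_eq_top_of_surjective _ (QuotientGroup.mk'_surjective _)

lemma homN_ext {M : Type*} [Group M] {f g : N X →* M} (h : ∀ x, f (xb x) = g (xb x)) : f = g := by
  apply QuotientGroup.monoidHom_ext
  apply FreeGroup.ext_hom
  intro x
  exact h x

lemma map_mem_commutator' {G M : Type*} [Group G] [Group M] (f : G →* M) {p : G}
    (hp : p ∈ commutator G) : f p ∈ commutator M := by
  have h1 : f p ∈ Subgroup.map f (commutator G) := Subgroup.mem_map_of_mem f hp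
  rw [commutator_def, Subgroup.map_commutator] at h1
  exact Subgroup.commutator_mono le_top le_top h1

/-- lift of a map `X → M` to `N X`, for `M` of class at most two. -/
def liftN {M : Type*} [Group M] (hM : ∀ g h k : M, ⁅⁅g, h⁆, k⁆ = 1) (v : X → M) : N X →* M :=
  QuotientGroup.lift _ (FreeGroup.lift v) (by
    intro w hw
    have hker : (⊤ : Subgroup (FreeGroup X)).lowerCentralSeries 2 ≤ (FreeGroup.lift v).ker := by
      rw [Subgroup.lowerCentralSeries_succ, Subgroup.commutator_def, Subgroup.closure_le]
      rintro _ ⟨p, hp, q, -, rfl⟩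
      have hp' : (FreeGroup.lift v) p ∈ commutator M := by
        rw [Subgroup.top_lowerCentralSeries_one] at hp
        exact map_mem_commutator' _ hp
      have : (FreeGroup.lift v) (p * q * p⁻¹ * q⁻¹) = ⁅(FreeGroup.lift v) p, (FreeGroup.lift v) q⁆ := by
        rw [← commutatorElement_def, map_commutatorElement]
      show p * q * p⁻¹ * q⁻¹ ∈ (FreeGroup.lift v).ker
      rw [MonoidHom.mem_ker, this]
      exact comm_central hM hp' _
    exact MonoidHom.mem_ker.mp (hker hw))

lemma liftN_xb {M : Type*} [Group M] (hM : ∀ g h k : M, ⁅⁅g, h⁆, k⁆ = 1) (v : X → M) (x : X) :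
    liftN hM v (xb x) = v x := by
  show QuotientGroup.lift _ (FreeGroup.lift v) _ (QuotientGroup.mk (FreeGroup.of x)) = v x
  exact FreeGroup.lift_apply_of

lemma mem_commutator_of_ab_one {G : Type*} [Group G] {g : G}
    (h : Abelianization.of g = 1) : g ∈ commutator G :=
  (QuotientGroup.eq_one_iff g).mp h

lemma ab_one_of_mem_commutator {G : Type*} [Group G] {g : G}
    (h : g ∈ commutator G) : Abelianization.of g = 1 :=
  (QuotientGroup.eq_one_iff g).mpr h

/-- a monoid endomorphism acting trivially on commutators fixes the commutator subgroup. -/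
lemma fixes_commutator {σ : N X →* N X}
    (hσ : ∀ g h : N X, σ ⁅g, h⁆ = ⁅g, h⁆) : ∀ n ∈ commutator (N X), σ n = n := by
  intro n hn
  rw [commutator_eq_closure] at hn
  induction hn using Subgroup.closure_induction with
  | mem x hx => obtain ⟨g, h, rfl⟩ := hx; exact hσ g h
  | one => exact map_one σ
  | mul x y hx hy ihx ihy => rw [map_mul, ihx, ihy]
  | inv x hx ihx => rw [map_inv, ihx]

lemma comm_eq_of_IA {σ : N X →* N X}
    (hσ : ∀ g : N X, Abelianization.of (σ g) = Abelianization.of g) (g h : N X) :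
    σ ⁅g, h⁆ = ⁅g, h⁆ := by
  have hmem : ∀ k : N X, k⁻¹ * σ k ∈ commutator (N X) := fun k => by
    apply mem_commutator_of_ab_one
    rw [map_mul, map_inv, hσ]
    group
  obtain ⟨d₁, hd₁, hg⟩ : ∃ d, d ∈ commutator (N X) ∧ σ g = g * d := ⟨_, hmem g, by group⟩
  obtain ⟨d₂, hd₂, hh⟩ : ∃ d, d ∈ commutator (N X) ∧ σ h = h * d := ⟨_, hmem h, by group⟩
  rw [map_commutatorElement, hg, hh, comm_mul_left' class2N, comm_mul_right' class2N,
    comm_mul_right' class2N, comm_central class2N hd₁, comm_central' class2N hd₂,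
    comm_central' class2N hd₂]
  simp

lemma comm_eq_of_ASym {σ : N X →* N X}
    (hσ : ∀ g : N X, Abelianization.of (σ g) = (Abelianization.of g)⁻¹) (g h : N X) :
    σ ⁅g, h⁆ = ⁅g, h⁆ := by
  have hmem : ∀ k : N X, k * σ k ∈ commutator (N X) := fun k => by
    apply mem_commutator_of_ab_one
    rw [map_mul, hσ]
    group
  obtain ⟨d₁, hd₁, hg⟩ : ∃ d, d ∈ commutator (N X) ∧ σ g = g⁻¹ * d := ⟨_, hmem g, by group⟩
  obtain ⟨d₂, hd₂, hh⟩ : ∃ d, d ∈ commutator (N X) ∧ σ h = h⁻¹ * d := ⟨_, hmem h, by group⟩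
  rw [map_commutatorElement, hg, hh, comm_mul_left' class2N, comm_mul_right' class2N,
    comm_mul_right' class2N, comm_central class2N hd₁, comm_central' class2N hd₂,
    comm_central' class2N hd₂, comm_inv_inv' class2N]
  simp

lemma IA_of_gen {σ : N X →* N X}
    (h : ∀ x, Abelianization.of (σ (xb x)) = Abelianization.of (xb x)) :
    ∀ g : N X, Abelianization.of (σ g) = Abelianization.of g := by
  have := homN_ext (f := (Abelianization.of).comp σ) (g := Abelianization.of) (by
    intro x; simpa using h x)
  intro g
  exact DFunLike.congr_fun this g

lemma ASym_of_gen {σ : N X →* N X}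
    (h : ∀ x, Abelianization.of (σ (xb x)) = (Abelianization.of (xb x))⁻¹) :
    ∀ g : N X, Abelianization.of (σ g) = (Abelianization.of g)⁻¹ := by
  have := homN_ext (f := (Abelianization.of).comp σ)
    (g := (invMonoidHom).comp Abelianization.of) (by
      intro x; simpa [invMonoidHom] using h x)
  intro g
  simpa [invMonoidHom] using DFunLike.congr_fun this g

/-- build an automorphism of `N X` from a pair of inverse endomorphisms. -/
def autOf (f g : N X →* N X) (h1 : ∀ x, g (f (xb x)) = xb x) (h2 : ∀ x, f (g (xb x)) = xb x) :
    MulAut (N X) :=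
  MonoidHom.toMulEquiv f g
    (homN_ext (by intro x; simpa using h1 x))
    (homN_ext (by intro x; simpa using h2 x))

lemma autOf_apply (f g : N X →* N X) (h1) (h2) (n : N X) : autOf f g h1 h2 n = f n := rfl

/-- the automorphism inverting the generators. -/
noncomputable def th0 : MulAut (N X) :=
  autOf (liftN class2N fun x => (xb x)⁻¹) (liftN class2N fun x => (xb x)⁻¹)
    (by intro x; rw [liftN_xb, map_inv, liftN_xb, inv_inv])
    (by intro x; rw [liftN_xb, map_inv, liftN_xb, inv_inv])

lemma th0_xb (x : X) : (th0 (xb x) : N X) = (xb x)⁻¹ :=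
  (autOf_apply _ _ _ _ (xb x)).trans (liftN_xb _ _ x)

lemma th0_ASym : ∀ g : N X, Abelianization.of (th0 g) = (Abelianization.of g)⁻¹ := by
  have : ∀ g : N X, Abelianization.of ((th0 (X := X)).toMonoidHom g) = (Abelianization.of g)⁻¹ :=
    ASym_of_gen (by intro x; rw [MulEquiv.coe_toMonoidHom, th0_xb, map_inv])
  exact this

lemma th0_fix : ∀ n ∈ commutator (N X), th0 n = n := by
  have : ∀ n ∈ commutator (N X), (th0 (X := X)).toMonoidHom n = n :=
    fixes_commutator (comm_eq_of_ASym th0_ASym)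
  exact this

/-- permutation automorphisms. -/
noncomputable def permAut (ρ : Equiv.Perm X) : MulAut (N X) :=
  autOf (liftN class2N fun x => xb (ρ x)) (liftN class2N fun x => xb (ρ⁻¹ x))
    (by intro x; rw [liftN_xb, liftN_xb, Equiv.Perm.coe_inv, Equiv.symm_apply_apply])
    (by intro x; rw [liftN_xb, liftN_xb, Equiv.Perm.coe_inv, Equiv.apply_symm_apply])

lemma permAut_xb (ρ : Equiv.Perm X) (x : X) : permAut ρ (xb x) = xb (ρ x) :=
  (autOf_apply _ _ _ _ (xb x)).trans (liftN_xb _ _ x)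

/-! ### coordinates -/

/-- indicator function -/
noncomputable def ind (u x : X) : ℤ := @ite _ (x = u) (Classical.propDecidable _) 1 0

lemma ind_self (u : X) : ind u u = 1 := by rw [ind, if_pos rfl]

lemma ind_ne {u x : X} (h : x ≠ u) : ind u x = 0 := by rw [ind, if_neg h]

lemma ind_mul_eq_zero {u v : X} (huv : u ≠ v) (x : X) : ind u x * ind v x = 0 := by
  rcases eq_or_ne x u with rfl | h
  · rw [ind_ne huv, mul_zero]
  · rw [ind_ne h, zero_mul]

lemma ind_perm (ρ : Equiv.Perm X) (u x : X) : ind u (ρ x) = ind (ρ⁻¹ u) x := by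
  by_cases h : ρ x = u
  · have hx : x = ρ⁻¹ u := by rw [← h, Equiv.Perm.coe_inv, Equiv.symm_apply_apply]
    subst hx
    rw [ind_self, ind, if_pos h]
  · rw [ind_ne h, ind_ne (fun hc => h (by rw [hc, Equiv.Perm.coe_inv, Equiv.apply_symm_apply]))]

/-- the pair-coordinate homomorphisms -/
noncomputable def chi (u v : X) : N X →* Hg :=
  liftN Hg.class2 fun x => ⟨ind u x, ind v x, 0⟩

lemma chi_xb (u v x : X) : chi u v (xb x) = ⟨ind u x, ind v x, 0⟩ := liftN_xb _ _ x

/-- the commutator-plane coordinate -/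
noncomputable def Lc (u v : X) (n : N X) : ℤ := (chi u v n).c

/-- the exponent-sum coordinate -/
noncomputable def ec (v : X) (n : N X) : ℤ := (chi v v n).a

lemma chi_a (u v : X) (n : N X) : (chi u v n).a = ec u n := by
  have h : Hg.aHom.comp (chi u v) = Hg.aHom.comp (chi u u) :=
    homN_ext (fun x => by rw [MonoidHom.comp_apply, MonoidHom.comp_apply, chi_xb, chi_xb]; rfl)
  exact congrArg Multiplicative.toAdd (DFunLike.congr_fun h n)

lemma chi_b (u v : X) (n : N X) : (chi u v n).b = ec v n := by
  have h : Hg.bHom.comp (chi u v) = Hg.aHom.comp (chi v v) :=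
    homN_ext (fun x => by rw [MonoidHom.comp_apply, MonoidHom.comp_apply, chi_xb, chi_xb]; rfl)
  exact congrArg Multiplicative.toAdd (DFunLike.congr_fun h n)

lemma ec_xb (v x : X) : ec v (xb x) = ind v x := by
  show (chi v v (xb x)).a = ind v x
  rw [chi_xb]

lemma ec_one (v : X) : ec v (1 : N X) = 0 := by
  show (chi v v (1 : N X)).a = 0
  rw [map_one, Hg.one_a]

lemma ec_mul (v : X) (g h : N X) : ec v (g * h) = ec v g + ec v h := by
  show (chi v v (g * h)).a = (chi v v g).a + (chi v v h).a
  rw [map_mul, Hg.mul_a]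

lemma ec_inv (v : X) (g : N X) : ec v g⁻¹ = - ec v g := by
  show (chi v v g⁻¹).a = -(chi v v g).a
  rw [map_inv, Hg.inv_a]

lemma ec_comm_zero {n : N X} (hn : n ∈ commutator (N X)) (v : X) : ec v n = 0 :=
  (Hg.commutator_mem_KC (map_mem_commutator' (chi v v) hn)).1

lemma ec_commEl (v : X) (g h : N X) : ec v ⁅g, h⁆ = 0 :=
  ec_comm_zero (mem_commutator_self' g h) v

lemma chi_ab_zero {n : N X} (hn : n ∈ commutator (N X)) (u v : X) :
    (chi u v n).a = 0 ∧ (chi u v n).b = 0 := by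
  rw [chi_a, chi_b]
  exact ⟨ec_comm_zero hn u, ec_comm_zero hn v⟩

lemma Lc_xb (u v x : X) : Lc u v (xb x) = 0 := by
  show (chi u v (xb x)).c = 0
  rw [chi_xb]


lemma Lc_one (u v : X) : Lc u v (1 : N X) = 0 := by
  show (chi u v (1 : N X)).c = 0
  rw [map_one, Hg.one_c]

lemma Lc_mul_full (u v : X) (g h : N X) :
    Lc u v (g * h) = Lc u v g + Lc u v h + ec u g * ec v h := by
  show (chi u v (g * h)).c = (chi u v g).c + (chi u v h).c + ec u g * ec v h
  rw [map_mul, Hg.mul_c, chi_a, chi_b]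

lemma Lc_inv_full (u v : X) (g : N X) :
    Lc u v g⁻¹ = - Lc u v g + ec u g * ec v g := by
  show (chi u v g⁻¹).c = -(chi u v g).c + ec u g * ec v g
  rw [map_inv, Hg.inv_c, chi_a, chi_b]

lemma Lc_mul {g : N X} (hg : g ∈ commutator (N X)) (u v : X) (h : N X) :
    Lc u v (g * h) = Lc u v g + Lc u v h := by
  rw [Lc_mul_full, ec_comm_zero hg, zero_mul, add_zero]

lemma Lc_inv {g : N X} (hg : g ∈ commutator (N X)) (u v : X) :
    Lc u v g⁻¹ = - Lc u v g := by
  rw [Lc_inv_full, ec_comm_zero hg, zero_mul, add_zero]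

lemma Lc_zpow {n : N X} (hn : n ∈ commutator (N X)) (u v : X) (k : ℤ) :
    Lc u v (n ^ k) = k * Lc u v n := by
  show (chi u v (n ^ k)).c = k * (chi u v n).c
  rw [map_zpow, Hg.c_zpow ⟨(chi_ab_zero hn u v).1, (chi_ab_zero hn u v).2⟩]

lemma Lc_commEl (u v : X) (g h : N X) :
    Lc u v ⁅g, h⁆ = ec u g * ec v h - ec u h * ec v g := by
  show (chi u v ⁅g, h⁆).c = _
  rw [map_commutatorElement, Hg.commutator_formula]
  show (chi u v g).a * (chi u v h).b - (chi u v h).a * (chi u v g).b = _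
  rw [chi_a, chi_b, chi_a, chi_b]

lemma L_antisym {u v : X} (huv : u ≠ v) {n : N X} (hn : n ∈ commutator (N X)) :
    Lc v u n = - Lc u v n := by
  have hhom : Hg.flipHom.comp (chi u v) = chi v u :=
    homN_ext (fun x => by
      rw [MonoidHom.comp_apply, chi_xb, chi_xb, Hg.flipHom_apply]
      have h0 : ind u x * ind v x = 0 := ind_mul_eq_zero huv x
      ext <;> simp [h0])
  have h3 : (Hg.flipHom (chi u v n)).c = (chi v u n).c := congrArg Hg.c (DFunLike.congr_fun hhom n)
  rw [Hg.flipHom_apply] at h3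
  show (chi v u n).c = -(chi u v n).c
  rw [← h3]
  show (chi u v n).a * (chi u v n).b - (chi u v n).c = _
  rw [(chi_ab_zero hn u v).1, zero_mul, zero_sub]

lemma L_perm (ρ : Equiv.Perm X) (u v : X) (n : N X) :
    Lc u v (permAut ρ n) = Lc (ρ⁻¹ u) (ρ⁻¹ v) n := by
  have hhom : (chi u v).comp (permAut ρ).toMonoidHom = chi (ρ⁻¹ u) (ρ⁻¹ v) :=
    homN_ext (fun x => by
      rw [MonoidHom.comp_apply, MulEquiv.coe_toMonoidHom, permAut_xb, chi_xb, chi_xb,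
        ind_perm, ind_perm])
  exact congrArg Hg.c (DFunLike.congr_fun hhom n)

lemma exists_support (n : N X) :
    ∃ S : Finset X, ∀ u v : X, u ∉ S ∨ v ∉ S → Lc u v n = 0 := by
  classical
  obtain ⟨w, rfl⟩ := QuotientGroup.mk'_surjective ((⊤ : Subgroup (FreeGroup X)).lowerCentralSeries 2) n
  have key : ∃ S : Finset X,
      (QuotientGroup.mk' ((⊤ : Subgroup (FreeGroup X)).lowerCentralSeries 2) w : N X)
        ∈ Subgroup.closure ((xb : X → N X) '' (S : Set X)) := by
    refine FreeGroup.induction_on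
      (C := fun w => ∃ S : Finset X,
        (QuotientGroup.mk' ((⊤ : Subgroup (FreeGroup X)).lowerCentralSeries 2) w : N X)
          ∈ Subgroup.closure ((xb : X → N X) '' (S : Set X))) w
      ⟨∅, by rw [map_one]; exact one_mem _⟩
      (fun x => ⟨{x}, Subgroup.subset_closure ⟨x, by simp, rfl⟩⟩)
      (fun x _ => ⟨{x}, by
        rw [map_inv]
        exact inv_mem (Subgroup.subset_closure ⟨x, by simp, rfl⟩)⟩)
      ?_
    rintro w₁ w₂ hw₁ hw₂
    obtain ⟨S₁, h₁⟩ := hw₁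
    obtain ⟨S₂, h₂⟩ := hw₂
    refine ⟨S₁ ∪ S₂, ?_⟩
    rw [map_mul]
    have hsub₁ : (xb : X → N X) '' (S₁ : Set X)
        ⊆ (xb : X → N X) '' ((S₁ ∪ S₂ : Finset X) : Set X) := by
      apply Set.image_mono
      intro s hs
      simp only [Finset.coe_union, Set.mem_union]
      exact Or.inl hs
    have hsub₂ : (xb : X → N X) '' (S₂ : Set X)
        ⊆ (xb : X → N X) '' ((S₁ ∪ S₂ : Finset X) : Set X) := by
      apply Set.image_mono
      intro s hs
      simp only [Finset.coe_union, Set.mem_union]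
      exact Or.inr hs
    exact mul_mem (Subgroup.closure_mono hsub₁ h₁) (Subgroup.closure_mono hsub₂ h₂)
  obtain ⟨S, hS⟩ := key
  refine ⟨S, ?_⟩
  intro u v huv
  cases huv with
  | inl hu =>
    have hle : Subgroup.closure ((xb : X → N X) '' (S : Set X))
        ≤ Subgroup.comap (chi u v) Hg.KA := by
      rw [Subgroup.closure_le]
      rintro _ ⟨s, hs, rfl⟩
      rw [SetLike.mem_coe, Subgroup.mem_comap]
      show (chi u v (xb s)).a = 0 ∧ (chi u v (xb s)).c = 0
      constructor
      · rw [chi_xb]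
        exact ind_ne (fun h => hu (by rw [← h]; exact hs))
      · rw [chi_xb]
    have h2 : (chi u v ((QuotientGroup.mk' ((⊤ : Subgroup (FreeGroup X)).lowerCentralSeries 2)) w)).a = 0
        ∧ (chi u v ((QuotientGroup.mk' ((⊤ : Subgroup (FreeGroup X)).lowerCentralSeries 2)) w)).c = 0 :=
      Subgroup.mem_comap.mp (hle hS)
    exact h2.2
  | inr hv =>
    have hle : Subgroup.closure ((xb : X → N X) '' (S : Set X))
        ≤ Subgroup.comap (chi u v) Hg.KB := by
      rw [Subgroup.closure_le]
      rintro _ ⟨s, hs, rfl⟩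
      rw [SetLike.mem_coe, Subgroup.mem_comap]
      show (chi u v (xb s)).b = 0 ∧ (chi u v (xb s)).c = 0
      constructor
      · rw [chi_xb]
        exact ind_ne (fun h => hv (by rw [← h]; exact hs))
      · rw [chi_xb]
    have h2 : (chi u v ((QuotientGroup.mk' ((⊤ : Subgroup (FreeGroup X)).lowerCentralSeries 2)) w)).b = 0
        ∧ (chi u v ((QuotientGroup.mk' ((⊤ : Subgroup (FreeGroup X)).lowerCentralSeries 2)) w)).c = 0 :=
      Subgroup.mem_comap.mp (hle hS)
    exact h2.2

/-! ### representation of commutator elements and square roots -/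

section Rep

variable [LinearOrder X]

noncomputable def ebar (p : X × X) : ↥(Subgroup.center (N X)) :=
  ⟨⁅xb p.1, xb p.2⁆, commutator_le_center' class2N (mem_commutator_self' _ _)⟩

lemma ebar_coe (p : X × X) : (ebar p : N X) = ⁅xb p.1, xb p.2⁆ := rfl

noncomputable def pprod (μ : (X × X) →₀ ℤ) : ↥(Subgroup.center (N X)) :=
  μ.prod fun p k => ebar p ^ k

lemma pprod_zero : pprod (X := X) 0 = 1 := Finsupp.prod_zero_index

lemma pprod_single (p : X × X) (k : ℤ) : pprod (Finsupp.single p k) = ebar p ^ k := by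
  show Finsupp.prod _ _ = _
  exact Finsupp.prod_single_index (zpow_zero _)

lemma pprod_add (μ ν : (X × X) →₀ ℤ) : pprod (μ + ν) = pprod μ * pprod ν :=
  Finsupp.prod_add_index' (fun p => zpow_zero _) (fun p b c => zpow_add _ b c)

lemma pprod_neg (μ : (X × X) →₀ ℤ) : pprod (-μ) = (pprod μ)⁻¹ := by
  have h : pprod μ * pprod (-μ) = 1 := by
    rw [← pprod_add]
    simp [pprod_zero]
  exact (inv_eq_of_mul_eq_one_right h).symm

lemma pprod_mem (μ : (X × X) →₀ ℤ) : (pprod μ : N X) ∈ commutator (N X) := by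
  have h : pprod μ ∈ Subgroup.comap (Subgroup.center (N X)).subtype (commutator (N X)) := by
    apply Subgroup.prod_mem
    intro p _
    rw [Subgroup.mem_comap]
    show ((ebar p ^ μ p : ↥(Subgroup.center (N X))) : N X) ∈ commutator (N X)
    rw [SubgroupClass.coe_zpow, ebar_coe]
    exact Subgroup.zpow_mem _ (mem_commutator_self' _ _) _
  exact h

/-- representability by an ordered product of basic commutators -/
def RepP (n : N X) : Prop :=
  ∃ μ : (X × X) →₀ ℤ, (∀ p ∈ μ.support, p.1 < p.2) ∧ n = (pprod μ : N X)

lemma repP_one : RepP (1 : N X) := ⟨0, by simp, by rw [pprod_zero]; rfl⟩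

lemma repP_mul {n m : N X} (hn : RepP n) (hm : RepP m) : RepP (n * m) := by
  classical
  obtain ⟨μ, hμ, rfl⟩ := hn
  obtain ⟨ν, hν, rfl⟩ := hm
  refine ⟨μ + ν, ?_, ?_⟩
  · intro p hp
    rcases Finset.mem_union.mp (Finsupp.support_add hp) with h | h
    · exact hμ p h
    · exact hν p h
  · rw [pprod_add]
    rfl

lemma repP_inv {n : N X} (hn : RepP n) : RepP n⁻¹ := by
  obtain ⟨μ, hμ, rfl⟩ := hn
  refine ⟨-μ, ?_, ?_⟩
  · intro p hp
    rw [Finsupp.support_neg] at hp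
    exact hμ p hp
  · rw [pprod_neg]
    rfl

lemma repP_comm_xb (x y : X) : RepP ⁅xb x, xb (y : X)⁆ := by
  rcases lt_trichotomy x y with h | h | h
  · refine ⟨Finsupp.single (x, y) 1, ?_, ?_⟩
    · intro p hp
      have hp' := Finsupp.support_single_subset hp
      simp only [Finset.mem_singleton] at hp'
      subst hp'
      exact h
    · rw [pprod_single, zpow_one, ebar_coe]
  · subst h
    rw [commutatorElement_self]
    exact repP_one
  · have heq : ⁅xb x, xb y⁆ = ⁅xb y, xb x⁆⁻¹ := by rw [commutatorElement_inv]
    rw [heq]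
    apply repP_inv
    refine ⟨Finsupp.single (y, x) 1, ?_, ?_⟩
    · intro p hp
      have hp' := Finsupp.support_single_subset hp
      simp only [Finset.mem_singleton] at hp'
      subst hp'
      exact h
    · rw [pprod_single, zpow_one, ebar_coe]

lemma repP_commEl (g h : N X) : RepP ⁅g, h⁆ := by
  have hx : ∀ (x : X) (h : N X), RepP ⁅xb x, h⁆ := by
    intro x h
    have hmem : h ∈ Subgroup.closure (Set.range (xb : X → N X)) := by
      rw [closure_range_xb]
      exact Subgroup.mem_top h
    induction hmem using Subgroup.closure_induction with
    | mem y hy => obtain ⟨y', rfl⟩ := hy; exact repP_comm_xb x y'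
    | one => rw [commutatorElement_one_right]; exact repP_one
    | mul a b ha hb iha ihb => rw [comm_mul_right' class2N]; exact repP_mul iha ihb
    | inv a ha iha => rw [comm_inv_right' class2N]; exact repP_inv iha
  have hmem : g ∈ Subgroup.closure (Set.range (xb : X → N X)) := by
    rw [closure_range_xb]
    exact Subgroup.mem_top g
  induction hmem using Subgroup.closure_induction with
  | mem y hy => obtain ⟨y', rfl⟩ := hy; exact hx y' h
  | one => rw [commutatorElement_one_left]; exact repP_one
  | mul a b ha hb iha ihb => rw [comm_mul_left' class2N]; exact repP_mul iha ihb
  | inv a ha iha => rw [comm_inv_left' class2N]; exact repP_inv iha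

lemma repP_of_mem {n : N X} (hn : n ∈ commutator (N X)) : RepP n := by
  rw [commutator_eq_closure] at hn
  induction hn using Subgroup.closure_induction with
  | mem y hy => obtain ⟨g, h, rfl⟩ := hy; exact repP_commEl g h
  | one => exact repP_one
  | mul a b ha hb iha ihb => exact repP_mul iha ihb
  | inv a ha iha => exact repP_inv iha

lemma Lc_coe_prod (u v : X) (s : Finset (X × X)) (F : (X × X) → ↥(Subgroup.center (N X)))
    (hF : ∀ p, (F p : N X) ∈ commutator (N X)) :
    Lc u v ((∏ p ∈ s, F p : ↥(Subgroup.center (N X))) : N X) = ∑ p ∈ s, Lc u v (F p : N X) := by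
  classical
  induction s using Finset.induction_on with
  | empty => simp [Lc_one]
  | insert _ _ hns ih =>
    rename_i q s'
    rw [Finset.prod_insert hns, Finset.sum_insert hns]
    have hco : ((F q * ∏ p ∈ s', F p : ↥(Subgroup.center (N X))) : N X)
        = (F q : N X) * ((∏ p ∈ s', F p : ↥(Subgroup.center (N X))) : N X) := rfl
    rw [hco, Lc_mul (hF q), ih]

lemma Lc_pprod {u v : X} (huv : u < v) (μ : (X × X) →₀ ℤ)
    (hsupp : ∀ p ∈ μ.support, p.1 < p.2) :
    Lc u v (pprod μ : N X) = μ (u, v) := by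
  classical
  have h1 : Lc u v (pprod μ : N X) = ∑ p ∈ μ.support, Lc u v ((ebar p ^ μ p : ↥(Subgroup.center (N X))) : N X) := by
    apply Lc_coe_prod
    intro p
    rw [SubgroupClass.coe_zpow, ebar_coe]
    exact Subgroup.zpow_mem _ (mem_commutator_self' _ _) _
  rw [h1]
  have h2 : ∀ p ∈ μ.support, Lc u v ((ebar p ^ μ p : ↥(Subgroup.center (N X))) : N X)
      = if p = (u, v) then μ (u, v) else 0 := by
    intro p hp
    rw [SubgroupClass.coe_zpow, ebar_coe, Lc_zpow (mem_commutator_self' _ _), Lc_commEl,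
      ec_xb, ec_xb, ec_xb, ec_xb]
    by_cases hpu : p = (u, v)
    · subst hpu
      rw [if_pos rfl]
      show μ (u, v) * (ind u u * ind v v - ind u v * ind v u) = μ (u, v)
      rw [ind_self, ind_self, ind_ne (Ne.symm (ne_of_lt huv)), ind_ne (ne_of_lt huv)]
      ring
    · rw [if_neg hpu]
      have hlt := hsupp p hp
      have hzero : ind u p.1 * ind v p.2 - ind u p.2 * ind v p.1 = 0 := by
        rcases eq_or_ne p.1 u with h1u | h1u
        · rcases eq_or_ne p.2 v with h2v | h2v
          · exact absurd (Prod.ext h1u h2v) hpu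
          · rw [ind_ne h2v, mul_zero]
            rw [ind_ne (show p.2 ≠ u by
              intro hc
              have hpp : p.1 = p.2 := h1u.trans hc.symm
              rw [hpp] at hlt
              exact lt_irrefl _ hlt), zero_mul, sub_zero]
        · rw [ind_ne h1u, zero_mul]
          rcases eq_or_ne p.2 u with h2u | h2u
          · rw [ind_ne (show p.1 ≠ v by
              intro hc
              have hvu : v < u := by
                rw [← hc, ← h2u]
                exact hlt
              exact lt_asymm hvu huv), mul_zero, sub_zero]
          · rw [ind_ne h2u, zero_mul, zero_sub, neg_zero]
      rw [hzero, mul_zero]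
  rw [Finset.sum_congr rfl h2, Finset.sum_ite_eq' μ.support (u, v) (fun _ => μ (u, v))]
  by_cases hm : (u, v) ∈ μ.support
  · rw [if_pos hm]
  · rw [if_neg hm, Finsupp.notMem_support_iff.mp hm]

lemma exists_sqrt {n : N X} (hn : n ∈ commutator (N X))
    (heven : ∀ u v : X, u < v → 2 ∣ Lc u v n) :
    ∃ w : N X, w ∈ commutator (N X) ∧ n = w * w := by
  classical
  obtain ⟨μ, hsupp, rfl⟩ := repP_of_mem hn
  have hdvd : ∀ p : X × X, 2 ∣ μ p := by
    intro p
    by_cases hp : p ∈ μ.support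
    · have hlt := hsupp p hp
      have := heven p.1 p.2 hlt
      rw [Lc_pprod hlt μ hsupp] at this
      simpa using this
    · rw [Finsupp.notMem_support_iff.mp hp]
      exact dvd_zero 2
  set ν : (X × X) →₀ ℤ := Finsupp.mapRange (fun k => k / 2) (by norm_num) μ with hν
  have hsum : ν + ν = μ := by
    ext p
    rw [Finsupp.add_apply, hν, Finsupp.mapRange_apply]
    obtain ⟨k, hk⟩ := hdvd p
    rw [hk, Int.mul_ediv_cancel_left k (by norm_num)]
    ring
  refine ⟨(pprod ν : N X), pprod_mem ν, ?_⟩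
  have : pprod μ = pprod ν * pprod ν := by rw [← pprod_add, hsum]
  rw [this]
  rfl

end Rep

lemma autN_ext {e₁ e₂ : MulAut (N X)} (h : ∀ x, e₁ (xb x) = e₂ (xb x)) : e₁ = e₂ := by
  have h2 : e₁.toMonoidHom = e₂.toMonoidHom := homN_ext (fun x => h x)
  exact MulEquiv.toMonoidHom_injective h2

lemma aut_inv_apply {G : Type*} [Group G] (e : MulAut G) (g : G) : e⁻¹ (e g) = g := by
  rw [MulAut.inv_def]
  exact MulEquiv.symm_apply_apply e g

lemma permAut_inv_xb (ρ : Equiv.Perm X) (x : X) : (permAut ρ)⁻¹ (xb x) = xb (ρ⁻¹ x) := by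
  rw [MulAut.inv_def, MulEquiv.symm_apply_eq, permAut_xb, Equiv.Perm.coe_inv, Equiv.apply_symm_apply]

end Stmt14Aux

open Stmt14Aux

/-- If `t ∈ Out N` is an A-symmetry commuting, modulo `ĥ(K²)`, with
the image of every permutational automorphism of `N`, then `t` is a symmetry: it is
induced by an automorphism `θ` of `N` inverting all elements of some basis `B` of `N`. -/
theorem stmt14 (X : Type*) [Infinite X] (t : Out (N X)) (ht : ASymO t)
    (hcomm : ∀ (ρ : Equiv.Perm X) (π : MulAut (N X)),
      (∀ x : X, π (xb x) = xb (ρ x)) →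
      ∃ α : MulAut (N X), IA α ∧
        hhat (N X) π * t * (hhat (N X) π)⁻¹ * t⁻¹ = hhat (N X) (α ^ 2)) :
    ∃ (θ : MulAut (N X)) (B : Set (N X)), IsBasisN B ∧
      (∀ b ∈ B, θ b = b⁻¹) ∧ hhat (N X) θ = t := by
  classical
  letI : LinearOrder X := IsWellOrder.linearOrder WellOrderingRel
  obtain ⟨θ, hθt, hθA⟩ := ht
  set cx : X → N X := fun x => xb x * θ (xb x) with hcx
  have hcmem : ∀ x, cx x ∈ commutator (N X) := by
    intro x
    apply mem_commutator_of_ab_one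
    show Abelianization.of (xb x * θ (xb x)) = 1
    rw [map_mul, hθA]
    group
  have hθxb : ∀ x : X, θ (xb x) = (xb x)⁻¹ * cx x := by
    intro x
    show θ (xb x) = (xb x)⁻¹ * (xb x * θ (xb x))
    group
  -- the master relation, obtained from `hcomm`
  have rel : ∀ ρ : Equiv.Perm X, ∃ z : N X, ∀ u v x : X, ∃ k : ℤ,
      Lc (ρ⁻¹ u) (ρ⁻¹ v) (cx (ρ⁻¹ x))
        = ind u x * ec v z - ec u z * ind v x + Lc u v (cx x) + 2 * k := by
    intro ρ
    obtain ⟨α, hαIA, hout⟩ := hcomm ρ (permAut ρ) (fun x => permAut_xb ρ x)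
    rw [← hθt] at hout
    have hout2 : hhat (N X) (permAut ρ * θ * (permAut ρ)⁻¹ * θ⁻¹) = hhat (N X) (α ^ 2) := by
      rw [map_mul, map_mul, map_mul, map_inv, map_inv]
      exact hout
    obtain ⟨i, hiInn, hieq⟩ := (QuotientGroup.mk'_eq_mk' (Inn (N X))).mp hout2
    obtain ⟨z, rfl⟩ := hiInn
    have heq' : permAut ρ * θ * (permAut ρ)⁻¹ * θ⁻¹ = α ^ 2 * MulAut.conj z⁻¹ := by
      rw [map_inv, ← hieq]
      group
    set aa : X → N X := fun x => (xb x)⁻¹ * α (xb x) with haa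
    have haamem : ∀ x, aa x ∈ commutator (N X) := by
      intro x
      apply mem_commutator_of_ab_one
      show Abelianization.of ((xb x)⁻¹ * α (xb x)) = 1
      rw [map_mul, map_inv, hαIA]
      group
    have hαxb : ∀ x, α (xb x) = xb x * aa x := by
      intro x
      show α (xb x) = xb x * ((xb x)⁻¹ * α (xb x))
      group
    have hαfix : ∀ n ∈ commutator (N X), α n = n := by
      intro n hn
      exact fixes_commutator (σ := α.toMonoidHom) (comm_eq_of_IA (fun g => hαIA g)) n hn
    refine ⟨z⁻¹, ?_⟩
    intro u v x
    have happ : (permAut ρ) (θ ((permAut ρ)⁻¹ (θ⁻¹ (θ (xb x)))))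
        = α (α ((MulAut.conj z⁻¹) (θ (xb x)))) := by
      have h0 := congrArg (fun (e : MulAut (N X)) => e (θ (xb x))) heq'
      simpa only [MulAut.mul_apply, pow_two] using h0
    have hL : (permAut ρ) (θ ((permAut ρ)⁻¹ (θ⁻¹ (θ (xb x)))))
        = (xb x)⁻¹ * (permAut ρ) (cx (ρ⁻¹ x)) := by
      rw [aut_inv_apply, permAut_inv_xb, hθxb (ρ⁻¹ x), map_mul, map_inv, permAut_xb,
        Equiv.Perm.coe_inv, Equiv.apply_symm_apply]
    have hz2 : z⁻¹ * ((xb x)⁻¹ * cx x) * (z⁻¹)⁻¹ = (xb x)⁻¹ * (⁅xb x, z⁻¹⁆ * cx x) := by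
      have key : cx x * z = z * cx x := (central_of_mem class2N (hcmem x) z).symm
      calc z⁻¹ * ((xb x)⁻¹ * cx x) * (z⁻¹)⁻¹
          = z⁻¹ * (xb x)⁻¹ * (cx x * z) := by group
        _ = z⁻¹ * (xb x)⁻¹ * (z * cx x) := by rw [key]
        _ = (xb x)⁻¹ * (⁅xb x, z⁻¹⁆ * cx x) := by
            simp only [commutatorElement_def]
            group
    have hK : ⁅xb x, z⁻¹⁆ * cx x ∈ commutator (N X) :=
      mul_mem (mem_commutator_self' _ _) (hcmem x)
    have hR : α (α ((MulAut.conj z⁻¹) (θ (xb x))))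
        = (xb x * aa x * aa x)⁻¹ * (⁅xb x, z⁻¹⁆ * cx x) := by
      rw [MulAut.conj_apply, hθxb x, hz2, map_mul, hαfix _ hK, map_mul, hαfix _ hK,
        map_inv, map_inv, hαxb x, map_mul, hαxb x, hαfix _ (haamem x)]
    rw [hL, hR] at happ
    have hstep : (permAut ρ) (cx (ρ⁻¹ x))
        = xb x * ((xb x * aa x * aa x)⁻¹ * (⁅xb x, z⁻¹⁆ * cx x)) := by
      rw [← happ]
      group
    have e2 := congrArg (Lc u v) hstep
    rw [L_perm] at e2
    have hec_cx : ∀ y : X, ec y (cx x) = 0 := fun y => ec_comm_zero (hcmem x) y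
    have hec_aa : ∀ y : X, ec y (aa x) = 0 := fun y => ec_comm_zero (haamem x) y
    simp only [Lc_mul_full, Lc_inv_full, Lc_commEl, Lc_xb, ec_mul, ec_inv, ec_xb,
      ec_commEl, hec_cx, hec_aa] at e2
    refine ⟨-(Lc u v (aa x)), ?_⟩
    simp only [ec_inv]
    linarith
  -- Step A : off-diagonal coordinates are even
  have stepA : ∀ u v x : X, u ≠ v → x ≠ u → x ≠ v → (2:ℤ) ∣ Lc u v (cx x) := by
    intro u v x huv hxu hxv
    obtain ⟨S, hS⟩ := exists_support (cx x)
    obtain ⟨u', hu'⟩ := Infinite.exists_notMem_finset (S ∪ {u, v, x})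
    simp only [Finset.mem_union, Finset.mem_insert, Finset.mem_singleton, not_or] at hu'
    obtain ⟨hu'S, hu'u, hu'v, hu'x⟩ := hu'
    obtain ⟨z, hz⟩ := rel (Equiv.swap u u')
    obtain ⟨k, hk⟩ := hz u v x
    have hswu : (Equiv.swap u u')⁻¹ u = u' := by rw [Equiv.swap_inv, Equiv.swap_apply_left]
    have hswv : (Equiv.swap u u')⁻¹ v = v := by
      rw [Equiv.swap_inv]
      exact Equiv.swap_apply_of_ne_of_ne (Ne.symm huv) (Ne.symm hu'v)
    have hswx : (Equiv.swap u u')⁻¹ x = x := by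
      rw [Equiv.swap_inv]
      exact Equiv.swap_apply_of_ne_of_ne hxu (Ne.symm hu'x)
    rw [hswu, hswv, hswx, ind_ne hxu, ind_ne hxv] at hk
    have h0 : Lc u' v (cx x) = 0 := hS u' v (Or.inl hu'S)
    rw [h0] at hk
    exact ⟨-k, by linarith⟩
  -- Claim B : column constancy modulo 2
  have claimB : ∀ x x' y : X, y ≠ x → y ≠ x' → (2:ℤ) ∣ (Lc x y (cx x) - Lc x' y (cx x')) := by
    intro x x' y hyx hyx'
    rcases eq_or_ne x x' with rfl | hxx'
    · simp
    obtain ⟨z, hz⟩ := rel (Equiv.swap x x')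
    obtain ⟨x'', hx''⟩ := Infinite.exists_notMem_finset ({x, x', y} : Finset X)
    simp only [Finset.mem_insert, Finset.mem_singleton, not_or] at hx''
    obtain ⟨hx''x, hx''x', hx''y⟩ := hx''
    have hswx'' : (Equiv.swap x x')⁻¹ x'' = x'' := by
      rw [Equiv.swap_inv]
      exact Equiv.swap_apply_of_ne_of_ne hx''x hx''x'
    have hswy : (Equiv.swap x x')⁻¹ y = y := by
      rw [Equiv.swap_inv]
      exact Equiv.swap_apply_of_ne_of_ne hyx hyx'
    have hswx : (Equiv.swap x x')⁻¹ x = x' := by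
      rw [Equiv.swap_inv, Equiv.swap_apply_left]
    obtain ⟨k₁, hk₁⟩ := hz x'' y x''
    rw [hswx'', hswy, ind_self, ind_ne hx''y] at hk₁
    obtain ⟨k₂, hk₂⟩ := hz x y x
    rw [hswx, hswy, ind_self, ind_ne (Ne.symm hyx)] at hk₂
    refine ⟨k₁ - k₂, by linarith⟩
  -- the column function r
  obtain ⟨x₀⟩ : Nonempty X := inferInstance
  obtain ⟨x₁, hx₁⟩ := Infinite.exists_notMem_finset ({x₀} : Finset X)
  have hx10 : x₁ ≠ x₀ := by simpa using hx₁
  set pick : X → X := fun y => if y = x₀ then x₁ else x₀ with hpickdef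
  have hpick : ∀ y, pick y ≠ y := by
    intro y
    simp only [hpickdef]
    by_cases h : y = x₀
    · rw [if_pos h, h]
      exact hx10
    · rw [if_neg h]
      exact Ne.symm h
  set r : X → ℤ := fun y => Lc (pick y) y (cx (pick y)) with hrdef
  have hr : ∀ x y : X, y ≠ x → (2:ℤ) ∣ (Lc x y (cx x) - r y) := by
    intro x y h
    exact claimB x (pick y) y h (Ne.symm (hpick y))
  obtain ⟨S₀, hS₀⟩ := exists_support (cx x₀)
  have hrS : ∀ y : X, y ∉ S₀ → y ≠ x₀ → (2:ℤ) ∣ r y := by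
    intro y hy hyx
    have h1 := hr x₀ y hyx
    have h2 : Lc x₀ y (cx x₀) = 0 := hS₀ x₀ y (Or.inr hy)
    rw [h2] at h1
    omega
  set T : Finset X := (insert x₀ S₀).filter (fun y => ¬ ((2:ℤ) ∣ r y)) with hTdef
  have hTparity : ∀ y : X, (2:ℤ) ∣ (r y - if y ∈ T then (1:ℤ) else 0) := by
    intro y
    by_cases hyT : y ∈ T
    · rw [if_pos hyT]
      have h2 : ¬ ((2:ℤ) ∣ r y) := (Finset.mem_filter.mp hyT).2
      omega
    · rw [if_neg hyT, sub_zero]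
      by_cases hy0 : y ∈ insert x₀ S₀
      · by_contra hodd
        exact hyT (Finset.mem_filter.mpr ⟨hy0, hodd⟩)
      · refine hrS y ?_ ?_
        · exact fun hc => hy0 (Finset.mem_insert_of_mem hc)
        · exact fun hc => hy0 (by rw [hc]; exact Finset.mem_insert_self _ _)
  set zs : N X := ((T.toList).map xb).prod with hzsdef
  have hcount : ∀ (l : List X) (y : X), ec y ((l.map xb).prod) = (l.count y : ℤ) := by
    intro l y
    induction l with
    | nil => simpa using ec_one y
    | cons a0 tl ih =>
      rw [List.map_cons, List.prod_cons, ec_mul, ih, ec_xb]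
      by_cases ha0 : a0 = y
      · subst ha0
        rw [ind_self, List.count_cons_self]
        push_cast
        ring
      · rw [ind_ne ha0, List.count_cons_of_ne ha0]
        ring
  have hezs : ∀ y : X, ec y zs = if y ∈ T then (1:ℤ) else 0 := by
    intro y
    rw [hzsdef, hcount]
    by_cases hyT : y ∈ T
    · rw [if_pos hyT,
        List.count_eq_one_of_mem (Finset.nodup_toList T) (Finset.mem_toList.mpr hyT)]
      simp
    · rw [if_neg hyT,
        List.count_eq_zero_of_not_mem (fun hc => hyT (Finset.mem_toList.mp hc))]
      simp
  -- the corrected defect is doubly even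
  have hc'mem : ∀ x : X, cx x * ⁅xb x, zs⁆ ∈ commutator (N X) :=
    fun x => mul_mem (hcmem x) (mem_commutator_self' _ _)
  have hc'L : ∀ u v x : X, Lc u v (cx x * ⁅xb x, zs⁆)
      = Lc u v (cx x) + (ind u x * ec v zs - ec u zs * ind v x) := by
    intro u v x
    rw [Lc_mul (hcmem x), Lc_commEl, ec_xb, ec_xb]
  have heven : ∀ x u v : X, u < v → (2:ℤ) ∣ Lc u v (cx x * ⁅xb x, zs⁆) := by
    intro x u v huv
    rcases eq_or_ne x u with rfl | hxu
    · rw [hc'L, ind_self, ind_ne (ne_of_lt huv : x ≠ v), hezs v]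
      have h1 := hr x v (Ne.symm (ne_of_lt huv))
      have h2 := hTparity v
      by_cases hvT : v ∈ T
      · rw [if_pos hvT] at h2 ⊢
        simp only [one_mul, mul_zero, sub_zero]
        omega
      · rw [if_neg hvT] at h2 ⊢
        simp only [one_mul, mul_zero, sub_zero, add_zero]
        omega
    rcases eq_or_ne x v with rfl | hxv
    · rw [hc'L, ind_ne hxu, ind_self, hezs u]
      have hanti : Lc u x (cx x) = - Lc x u (cx x) := L_antisym hxu (hcmem x)
      have h1 := hr x u (Ne.symm hxu)
      have h2 := hTparity u
      rw [hanti]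
      by_cases huT : u ∈ T
      · rw [if_pos huT] at h2 ⊢
        simp only [zero_mul, mul_one, zero_sub]
        omega
      · rw [if_neg huT] at h2 ⊢
        simp only [zero_mul, mul_one, zero_sub]
        omega
    · rw [hc'L, ind_ne hxu, ind_ne hxv]
      simp only [zero_mul, mul_zero, sub_zero, add_zero, sub_self]
      simpa using stepA u v x (ne_of_lt huv) hxu hxv
  choose w hwmem hwsq using fun x : X => exists_sqrt (hc'mem x) (heven x)
  have hkey : ∀ x, cx x = w x * w x * ⁅xb x, zs⁆⁻¹ := by
    intro x
    have h := hwsq x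
    rw [← h]
    group
  set f₁ : N X →* N X := liftN class2N (fun x => xb x * w x) with hf₁def
  set f₂ : N X →* N X := liftN class2N (fun x => xb x * (w x)⁻¹) with hf₂def
  have hf₁xb : ∀ x, f₁ (xb x) = xb x * w x := by
    intro x
    rw [hf₁def]
    exact liftN_xb _ _ x
  have hf₂xb : ∀ x, f₂ (xb x) = xb x * (w x)⁻¹ := by
    intro x
    rw [hf₂def]
    exact liftN_xb _ _ x
  have hf₁fix : ∀ n ∈ commutator (N X), f₁ n = n :=
    fixes_commutator (comm_eq_of_IA (IA_of_gen (fun x => by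
      rw [hf₁xb, map_mul, ab_one_of_mem_commutator (hwmem x), mul_one])))
  have hf₂fix : ∀ n ∈ commutator (N X), f₂ n = n :=
    fixes_commutator (comm_eq_of_IA (IA_of_gen (fun x => by
      rw [hf₂xb, map_mul, map_inv, ab_one_of_mem_commutator (hwmem x), inv_one, mul_one])))
  have h12 : ∀ x, f₂ (f₁ (xb x)) = xb x := by
    intro x
    rw [hf₁xb, map_mul, hf₂xb, hf₂fix _ (hwmem x)]
    group
  have h21 : ∀ x, f₁ (f₂ (xb x)) = xb x := by
    intro x
    rw [hf₂xb, map_mul, map_inv, hf₁xb, hf₁fix _ (hwmem x)]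
    group
  set g₁ : MulAut (N X) := autOf f₁ f₂ h12 h21 with hg₁def
  set g₂ : MulAut (N X) := autOf f₂ f₁ h21 h12 with hg₂def
  have hg₁app : ∀ n, g₁ n = f₁ n := fun n => rfl
  have hg₂app : ∀ n, g₂ n = f₂ n := fun n => rfl
  have hθeq : θ = (g₂ * th0 * g₁) * MulAut.conj zs := by
    apply autN_ext
    intro x
    rw [MulAut.mul_apply, MulAut.mul_apply, MulAut.mul_apply, MulAut.conj_apply]
    have hd : zs * xb x * zs⁻¹ = xb x * ⁅(xb x)⁻¹, zs⁆ := by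
      simp only [commutatorElement_def]
      group
    rw [hd]
    have hdm : ⁅(xb x)⁻¹, zs⁆ ∈ commutator (N X) := mem_commutator_self' _ _
    have e1 : g₁ (xb x * ⁅(xb x)⁻¹, zs⁆) = xb x * w x * ⁅(xb x)⁻¹, zs⁆ := by
      rw [hg₁app, map_mul, hf₁xb, hf₁fix _ hdm]
    rw [e1]
    have e2 : th0 (xb x * w x * ⁅(xb x)⁻¹, zs⁆) = (xb x)⁻¹ * w x * ⁅(xb x)⁻¹, zs⁆ := by
      rw [map_mul, map_mul, th0_xb, th0_fix _ (hwmem x), th0_fix _ hdm]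
    rw [e2]
    have e3 : g₂ ((xb x)⁻¹ * w x * ⁅(xb x)⁻¹, zs⁆)
        = (xb x * (w x)⁻¹)⁻¹ * w x * ⁅(xb x)⁻¹, zs⁆ := by
      rw [hg₂app, map_mul, map_mul, map_inv, hf₂xb, hf₂fix _ (hwmem x), hf₂fix _ hdm]
    rw [e3, hθxb x, hkey x, comm_inv_left' class2N]
    have hcw : (xb x)⁻¹ * w x = w x * (xb x)⁻¹ :=
      central_of_mem class2N (hwmem x) ((xb x)⁻¹)
    symm
    calc (xb x * (w x)⁻¹)⁻¹ * w x * ⁅xb x, zs⁆⁻¹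
        = w x * (xb x)⁻¹ * w x * ⁅xb x, zs⁆⁻¹ := by group
      _ = (xb x)⁻¹ * w x * w x * ⁅xb x, zs⁆⁻¹ := by rw [← hcw]
      _ = (xb x)⁻¹ * (w x * w x * ⁅xb x, zs⁆⁻¹) := by group
  have hInn1 : hhat (N X) (MulAut.conj zs) = 1 := by
    have hk : MulAut.conj zs ∈ (QuotientGroup.mk' (Inn (N X))).ker := by
      rw [QuotientGroup.ker_mk']
      exact ⟨zs, rfl⟩
    exact MonoidHom.mem_ker.mp hk
  refine ⟨g₂ * th0 * g₁, ⇑g₂ '' Set.range (xb : X → N X), ⟨g₂, rfl⟩, ?_, ?_⟩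
  · rintro b ⟨y, ⟨x, rfl⟩, rfl⟩
    rw [MulAut.mul_apply, MulAut.mul_apply]
    have e0 : g₁ (g₂ (xb x)) = xb x := by
      rw [hg₁app, hg₂app]
      exact h21 x
    rw [e0, th0_xb, map_inv]
  · rw [← hθt, hθeq, map_mul (hhat (N X)) (g₂ * th0 * g₁) (MulAut.conj zs), hInn1, mul_one]
end

section
/- The centralizer of ĥ(φ) in Out N is induced by the centralizer of φ in Aut N: if s ∈ Out N satisfies s ĥ(φ) = ĥ(φ) s, then there exists σ ∈ Aut N with σ φ = φ σ and ĥ(σ) = s; conversely, ĥ(σ) commutes with ĥ(φ) for every σ ∈ Aut N commuting with φ. -/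
open FreeNilp

open scoped commutatorElement

/-! ### Auxiliary infrastructure for the proof of Statement 16 -/

section HeisGroup

/-- Heisenberg group over a commutative ring, modeled on `R × R × R`. -/
def Heis (R : Type*) [CommRing R] : Type _ := R × R × R

namespace Heis
variable {R : Type*} [CommRing R]

instance : Mul (Heis R) :=
  ⟨fun u v => (u.1 + v.1, u.2.1 + v.2.1, u.2.2 + v.2.2 + u.1 * v.2.1)⟩
instance : One (Heis R) := ⟨((0 : R), (0 : R), (0 : R))⟩
instance : Inv (Heis R) := ⟨fun u => (-u.1, -u.2.1, u.1 * u.2.1 - u.2.2)⟩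

lemma mul_def (u v : Heis R) :
    u * v = (u.1 + v.1, u.2.1 + v.2.1, u.2.2 + v.2.2 + u.1 * v.2.1) := rfl

lemma one_def : (1 : Heis R) = ((0:R), (0:R), (0:R)) := rfl

lemma inv_def (u : Heis R) : u⁻¹ = (-u.1, -u.2.1, u.1 * u.2.1 - u.2.2) := rfl

instance : Group (Heis R) where
  mul_assoc u v w := by
    show ((u.1 + v.1) + w.1, (u.2.1 + v.2.1) + w.2.1,
        (u.2.2 + v.2.2 + u.1 * v.2.1) + w.2.2 + (u.1 + v.1) * w.2.1) =
      (u.1 + (v.1 + w.1), u.2.1 + (v.2.1 + w.2.1),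
        u.2.2 + (v.2.2 + w.2.2 + v.1 * w.2.1) + u.1 * (v.2.1 + w.2.1))
    simp only [Prod.mk.injEq]
    and_intros <;> ring
  one_mul u := by
    show ((0:R) + u.1, (0:R) + u.2.1, (0:R) + u.2.2 + 0 * u.2.1) = u
    simp
    rfl
  mul_one u := by
    show (u.1 + 0, u.2.1 + 0, u.2.2 + 0 + u.1 * 0) = u
    simp
    rfl
  inv_mul_cancel u := by
    show (-u.1 + u.1, -u.2.1 + u.2.1, (u.1 * u.2.1 - u.2.2) + u.2.2 + -u.1 * u.2.1) =
      ((0:R), (0:R), (0:R))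
    simp only [Prod.mk.injEq]
    and_intros <;> ring

/-- the generator `p`. -/
def p : Heis R := ((1:R), 0, 0)
/-- the generator `q`. -/
def q : Heis R := ((0:R), 1, 0)

@[simp] lemma mul_fst (u v : Heis R) : (u * v).1 = u.1 + v.1 := rfl
@[simp] lemma mul_snd (u v : Heis R) : (u * v).2.1 = u.2.1 + v.2.1 := rfl
@[simp] lemma mul_trd (u v : Heis R) : (u * v).2.2 = u.2.2 + v.2.2 + u.1 * v.2.1 := rfl
@[simp] lemma p_fst : (p : Heis R).1 = 1 := rfl
@[simp] lemma p_snd : (p : Heis R).2.1 = 0 := rfl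
@[simp] lemma p_trd : (p : Heis R).2.2 = 0 := rfl

/-- first coordinate hom -/
def c₁ : Heis R →* Multiplicative R where
  toFun u := Multiplicative.ofAdd u.1
  map_one' := rfl
  map_mul' u v := by simp [mul_def, ofAdd_add]

/-- second coordinate hom -/
def c₂ : Heis R →* Multiplicative R where
  toFun u := Multiplicative.ofAdd u.2.1
  map_one' := rfl
  map_mul' u v := by simp [mul_def, ofAdd_add]

lemma comm_fst (g h : Heis R) : (⁅g, h⁆ : Heis R).1 = 0 := by
  have h1 := map_commutatorElement (c₁ (R := R)) g h
  have h2 : (⁅c₁ g, c₁ h⁆ : Multiplicative R) = 1 := commutatorElement_eq_one_iff_commute.mpr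
    (mul_comm _ _)
  rw [h2] at h1
  exact congrArg Multiplicative.toAdd h1

lemma comm_snd (g h : Heis R) : (⁅g, h⁆ : Heis R).2.1 = 0 := by
  have h1 := map_commutatorElement (c₂ (R := R)) g h
  have h2 : (⁅c₂ g, c₂ h⁆ : Multiplicative R) = 1 := commutatorElement_eq_one_iff_commute.mpr
    (mul_comm _ _)
  rw [h2] at h1
  exact congrArg Multiplicative.toAdd h1

lemma commutator_le_center : commutator (Heis R) ≤ Subgroup.center (Heis R) := by
  rw [commutator_def, Subgroup.commutator_le]
  intro g _ h _
  rw [Subgroup.mem_center_iff]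
  intro k
  rw [mul_def, mul_def, comm_fst, comm_snd]
  exact congrArg₂ Prod.mk (by ring) (congrArg₂ Prod.mk (by ring) (by ring))

lemma lcs_two : (⊤ : Subgroup (Heis R)).lowerCentralSeries 2 = ⊥ := by
  rw [eq_bot_iff, show (2:ℕ) = 1+1 from rfl, Subgroup.lowerCentralSeries_succ, Subgroup.commutator_def,
    Subgroup.closure_le]
  rintro x ⟨g, hg, h, -, rfl⟩
  rw [commutatorElement_def]
  rw [Subgroup.top_lowerCentralSeries_one] at hg
  have hc := Subgroup.mem_center_iff.mp (commutator_le_center hg)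
  have : g * h * g⁻¹ * h⁻¹ = 1 := by
    rw [← hc h]
    group
  simp [this, Subgroup.mem_bot]

end Heis

end HeisGroup

namespace StmtAux

open FreeNilp

variable {X : Type*}

lemma lcs_le_map_of_surjective {G H : Type*} [Group G] [Group H] (f : G →* H)
    (hf : Function.Surjective f) (n : ℕ) :
    (⊤ : Subgroup H).lowerCentralSeries n ≤ ((⊤ : Subgroup G).lowerCentralSeries n).map f := by
  induction n with
  | zero =>
      rw [Subgroup.lowerCentralSeries_zero, Subgroup.lowerCentralSeries_zero,
        Subgroup.map_top_of_surjective f hf]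
  | succ n ih =>
      rw [Subgroup.lowerCentralSeries_succ, Subgroup.commutator_def, Subgroup.closure_le]
      rintro x ⟨p, hp, q, -, rfl⟩
      rw [commutatorElement_def]
      obtain ⟨p', hp', rfl⟩ := ih hp
      obtain ⟨q', rfl⟩ := hf q
      have : p' * q' * p'⁻¹ * q'⁻¹ ∈ (⊤ : Subgroup G).lowerCentralSeries (n + 1) := by
        rw [Subgroup.lowerCentralSeries_succ, Subgroup.commutator_def]
        exact Subgroup.subset_closure ⟨p', hp', q', Subgroup.mem_top _, rfl⟩
      exact ⟨_, this, by simp [map_mul, map_inv]⟩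

lemma lcsN_two : (⊤ : Subgroup (N X)).lowerCentralSeries 2 = ⊥ := by
  apply le_antisymm
  · refine (lcs_le_map_of_surjective (QuotientGroup.mk' ((⊤ : Subgroup (FreeGroup X)).lowerCentralSeries 2))
      (QuotientGroup.mk'_surjective _) 2).trans ?_
    exact le_of_eq ((Subgroup.map_eq_bot_iff _).mpr (le_of_eq (QuotientGroup.ker_mk' _).symm))
  · exact bot_le

lemma homExt {M : Type*} [Group M] {f g : N X →* M}
    (h : ∀ x, f (xb x) = g (xb x)) : f = g := by
  have : f.comp (QuotientGroup.mk' _) = g.comp (QuotientGroup.mk' _) :=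
    FreeGroup.ext_hom _ _ h
  refine DFunLike.ext _ _ fun n => ?_
  induction n using QuotientGroup.induction_on with
  | H w => exact DFunLike.congr_fun this w

/-- homomorphisms out of `N X` from maps on generators into class-≤2 groups. -/
def mkHom {H : Type*} [Group H] (hH : (⊤ : Subgroup H).lowerCentralSeries 2 = ⊥) (f : X → H) :
    N X →* H :=
  QuotientGroup.lift _ (FreeGroup.lift f) (by
    intro g hg
    have h1 := Subgroup.lowerCentralSeries.map (FreeGroup.lift f) 2 (Subgroup.mem_map_of_mem _ hg)
    rw [hH, Subgroup.mem_bot] at h1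
    exact h1)

@[simp] lemma mkHom_xb {H : Type*} [Group H] (hH : (⊤ : Subgroup H).lowerCentralSeries 2 = ⊥)
    (f : X → H) (x : X) : mkHom hH f (xb x) = f x := by
  show FreeGroup.lift f (FreeGroup.of x) = f x
  simp

lemma lcs_two_of_comm {A : Type*} [CommGroup A] : (⊤ : Subgroup A).lowerCentralSeries 2 = ⊥ := by
  rw [eq_bot_iff, show (2:ℕ) = 1+1 from rfl, Subgroup.lowerCentralSeries_succ, Subgroup.commutator_def,
    Subgroup.closure_le]
  rintro x ⟨p, -, q, -, rfl⟩
  rw [commutatorElement_def]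
  have : p * q * p⁻¹ * q⁻¹ = 1 := by rw [mul_comm p q]; group
  simp [this, Subgroup.mem_bot]

/-- the abelianization map of `N X` onto the free abelian group. -/
noncomputable def pit : N X →* Multiplicative (X →₀ ℤ) :=
  mkHom lcs_two_of_comm (fun x => Multiplicative.ofAdd (Finsupp.single x 1))

@[simp] lemma pit_xb (x : X) :
    pit (xb x) = Multiplicative.ofAdd (Finsupp.single x 1) := mkHom_xb _ _ _

lemma central_of_pit (u : N X) (hu : pit u = 1) (n : N X) : u * n = n * u := by
  classical
  have hof : Abelianization.of u = 1 := by
    let γ₀ : (X →₀ ℤ) →+ Additive (Abelianization (N X)) :=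
      Finsupp.liftAddHom fun x => zmultiplesHom _ (Additive.ofMul (Abelianization.of (xb x)))
    have key : (Abelianization.of : N X →* Abelianization (N X)) =
        (AddMonoidHom.toMultiplicativeLeft γ₀).comp pit := by
      apply homExt
      intro x
      simp [γ₀, AddMonoidHom.toMultiplicativeLeft,
          AddMonoidHom.coe_toMultiplicativeLeft, Finsupp.liftAddHom_apply_single]
    rw [key]
    simp [hu]
  have hucomm : u ∈ commutator (N X) := by
    rwa [← QuotientGroup.eq_one_iff u]
  have h2 : ⁅u, n⁆ ∈ (⊤ : Subgroup (N X)).lowerCentralSeries 2 := by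
    have e : (⊤ : Subgroup (N X)).lowerCentralSeries 2 = ⁅(⊤ : Subgroup (N X)).lowerCentralSeries 1, (⊤ : Subgroup (N X))⁆ := by
      conv_lhs => rw [Subgroup.lowerCentralSeries_succ]
    rw [e]
    exact Subgroup.commutator_mem_commutator (by rwa [Subgroup.top_lowerCentralSeries_one]) (Subgroup.mem_top n)
  rw [lcsN_two, Subgroup.mem_bot] at h2
  exact (commutatorElement_eq_one_iff_commute.mp h2).eq

/-- evaluation at a point, on `Multiplicative (X →₀ ℤ)`. -/
noncomputable def ev (t : X) : Multiplicative (X →₀ ℤ) →* Multiplicative ℤ :=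
  AddMonoidHom.toMultiplicative (Finsupp.applyAddHom t)

@[simp] lemma ev_apply (t : X) (f : X →₀ ℤ) :
    ev t (Multiplicative.ofAdd f) = Multiplicative.ofAdd (f t) := rfl

/-- the cast `Multiplicative ℤ →* Multiplicative R`. -/
def castM (R : Type*) [CommRing R] : Multiplicative ℤ →* Multiplicative R :=
  AddMonoidHom.toMultiplicative (Int.castAddHom R)

@[simp] lemma castM_apply (R : Type*) [CommRing R] (k : ℤ) :
    castM R (Multiplicative.ofAdd k) = Multiplicative.ofAdd ((k : R)) := rfl

lemma ev_apply' (t : X) (m : Multiplicative (X →₀ ℤ)) :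
    ev t m = Multiplicative.ofAdd (Multiplicative.toAdd m t) := rfl

lemma castM_apply' (R : Type*) [CommRing R] (m : Multiplicative ℤ) :
    castM R m = Multiplicative.ofAdd ((Multiplicative.toAdd m : ℤ) : R) := rfl

variable [DecidableEq X]

/-- The generator assignment for Heisenberg detector homomorphisms. -/
def genmap (R : Type*) [CommRing R] (x₀ y : X) : X → Heis R := fun x =>
  if x = x₀ then Heis.p else if x = y then Heis.q else 1

/-- The Heisenberg detector homomorphism. -/
def rho (R : Type*) [CommRing R] (x₀ y : X) : N X →* Heis R :=
  mkHom Heis.lcs_two (genmap R x₀ y)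

lemma rho_fst (R : Type*) [CommRing R] (x₀ y : X) (w : N X) :
    ((rho R x₀ y) w).1 = ((Multiplicative.toAdd (pit w)) x₀ : ℤ) := by
  have key : (Heis.c₁ (R := R)).comp (rho R x₀ y)
      = ((castM R).comp (ev x₀)).comp pit := by
    apply homExt
    intro x
    by_cases hx : x = x₀
    · subst hx
      simp [rho, genmap, Heis.c₁, Heis.p]
    · simp [rho, genmap, Heis.c₁, Heis.p, Heis.q, Heis.one_def, hx,
        Finsupp.single_apply]
      change (if x = y then ((0:R), (1:R), (0:R)) else ((0:R), (0:R), (0:R))).1 = 0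
      split <;> rfl
  have := DFunLike.congr_fun key w
  simpa [Heis.c₁, castM_apply', ev_apply'] using congrArg Multiplicative.toAdd this

lemma rho_snd (R : Type*) [CommRing R] (x₀ y : X) (hy : y ≠ x₀) (w : N X) :
    ((rho R x₀ y) w).2.1 = ((Multiplicative.toAdd (pit w)) y : ℤ) := by
  have key : (Heis.c₂ (R := R)).comp (rho R x₀ y)
      = ((castM R).comp (ev y)).comp pit := by
    apply homExt
    intro x
    by_cases hx : x = x₀
    · subst hx
      simp [rho, genmap, Heis.c₂, Heis.p, Finsupp.single_apply, Ne.symm hy]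
    · by_cases hxy : x = y
      · subst hxy
        simp [rho, genmap, Heis.c₂, Heis.q, hx]
      · simp [rho, genmap, Heis.c₂, Heis.one_def, hx, hxy, Finsupp.single_apply,
          Ne.symm hxy]
  have := DFunLike.congr_fun key w
  simpa [Heis.c₂, castM_apply', ev_apply'] using congrArg Multiplicative.toAdd this

/-- The sign-flip endomorphism of the free abelian group. -/
noncomputable def epsA (x₀ : X) : (X →₀ ℤ) →+ (X →₀ ℤ) where
  toFun f := f - Finsupp.single x₀ (2 * f x₀)
  map_zero' := by simp
  map_add' f g := by
    ext t
    simp only [Finsupp.sub_apply, Finsupp.add_apply, Finsupp.single_apply]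
    split <;> ring

lemma epsA_apply (x₀ : X) (f : X →₀ ℤ) (t : X) :
    epsA x₀ f t = f t - (if x₀ = t then 2 * f x₀ else 0) := by
  simp only [epsA, AddMonoidHom.coe_mk, ZeroHom.coe_mk, Finsupp.sub_apply,
    Finsupp.single_apply]

lemma pit_phi_comp (x₀ : X) (φ : MulAut (N X))
    (hφ₀ : φ (xb x₀) = (xb x₀)⁻¹) (hφ : ∀ y : X, y ≠ x₀ → φ (xb y) = xb y) :
    pit.comp φ.toMonoidHom
      = (AddMonoidHom.toMultiplicative (epsA x₀)).comp (pit (X := X)) := by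
  apply homExt
  intro x
  by_cases hx : x = x₀
  · subst hx
    simp only [MonoidHom.comp_apply, MulEquiv.coe_toMonoidHom, hφ₀, map_inv, pit_xb,
      AddMonoidHom.toMultiplicative_apply_apply, toAdd_ofAdd, ← ofAdd_neg]
    congr 1
    ext t
    by_cases h : x = t
    · subst h
      simp only [Finsupp.neg_apply, epsA_apply, Finsupp.single_apply, eq_self_iff_true,
        if_true]
      omega
    · simp [epsA_apply, Finsupp.single_apply, h]
  · simp only [MonoidHom.comp_apply, MulEquiv.coe_toMonoidHom, hφ x hx, pit_xb,
      AddMonoidHom.toMultiplicative_apply_apply, toAdd_ofAdd]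
    congr 1
    ext t
    by_cases h : x₀ = t
    · subst h
      simp [epsA_apply, Finsupp.single_apply, hx]
    · simp [epsA_apply, Finsupp.single_apply, h]

end StmtAux

open StmtAux in
/-- The centralizer of `ĥ(φ)` in `Out N` is induced by the centralizer
of `φ` in `Aut N`. -/
theorem stmt16 (X : Type*) [Infinite X] (x₀ : X) (φ : MulAut (N X))
    (hφ₀ : φ (xb x₀) = (xb x₀)⁻¹) (hφ : ∀ y : X, y ≠ x₀ → φ (xb y) = xb y) :
    (∀ s : Out (N X), s * hhat (N X) φ = hhat (N X) φ * s →
      ∃ σ : MulAut (N X), σ * φ = φ * σ ∧ hhat (N X) σ = s) ∧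
    (∀ σ : MulAut (N X), σ * φ = φ * σ →
      hhat (N X) σ * hhat (N X) φ = hhat (N X) φ * hhat (N X) σ) := by
  classical
  constructor
  · intro s hs
    obtain ⟨σ, rfl⟩ := QuotientGroup.mk'_surjective (Inn (N X)) s
    have hs' : hhat (N X) σ * hhat (N X) φ = hhat (N X) φ * hhat (N X) σ := hs
    have h1 : hhat (N X) (σ * φ * σ⁻¹ * φ⁻¹) = 1 := by
      simp only [map_mul, map_inv]
      exact commutatorElement_eq_one_iff_commute.mpr hs'
    have h2 : σ * φ * σ⁻¹ * φ⁻¹ ∈ Inn (N X) := (QuotientGroup.eq_one_iff _).mp h1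
    obtain ⟨z, hz⟩ := h2
    -- The basic pointwise relation:  σ ∘ φ = conj z ∘ φ ∘ σ.
    have Rel : ∀ m : N X, σ (φ m) = z * φ (σ m) * z⁻¹ := by
      intro m
      have h3 := DFunLike.congr_fun hz (φ (σ m))
      simp only [MulAut.conj_apply, MulAut.mul_apply, MulAut.inv_def,
        MulEquiv.symm_apply_apply] at h3
      exact h3.symm
    -- φ is an involution
    have hφ2 : ∀ n : N X, φ (φ n) = n := by
      have hcomp : φ.toMonoidHom.comp φ.toMonoidHom = MonoidHom.id (N X) := by
        apply homExt
        intro x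
        by_cases hx : x = x₀
        · subst hx
          simp [hφ₀]
        · simp [hφ x hx]
      intro n
      simpa using DFunLike.congr_fun hcomp n
    -- z * φ z is central
    have hcentral : ∀ n : N X, (z * φ z) * n = n * (z * φ z) := by
      intro n
      have h4 := Rel (φ (σ.symm n))
      rw [hφ2] at h4
      rw [Rel (σ.symm n)] at h4
      rw [MulEquiv.apply_symm_apply] at h4
      rw [map_mul, map_mul, map_inv, hφ2] at h4
      conv_rhs => rw [h4]
      group
    -- the abelianized action of φ
    have hpitphi : ∀ n : N X, pit (φ n)
        = Multiplicative.ofAdd (epsA x₀ (Multiplicative.toAdd (pit n))) := by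
      intro n
      have h := DFunLike.congr_fun (pit_phi_comp x₀ φ hφ₀ hφ) n
      simpa using h
    -- coordinates of z away from x₀ vanish
    have hzy : ∀ y : X, y ≠ x₀ → Multiplicative.toAdd (pit z) y = 0 := by
      intro y hy
      have h5 : rho ℤ x₀ y (z * φ z) * rho ℤ x₀ y (xb x₀)
          = rho ℤ x₀ y (xb x₀) * rho ℤ x₀ y (z * φ z) := by
        rw [← map_mul, ← map_mul, hcentral (xb x₀)]
      have hX : rho ℤ x₀ y (xb x₀) = Heis.p := by simp [rho, genmap]
      rw [hX] at h5
      have h6 := congrArg (fun u : Heis ℤ => u.2.2) h5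
      simp only [Heis.mul_trd, Heis.p_fst, Heis.p_snd, Heis.p_trd, mul_zero, mul_one,
        add_zero, zero_add, one_mul] at h6
      have h7 : Multiplicative.toAdd (pit (z * φ z)) y = 0 := by
        have h7' := h6
        rw [rho_snd ℤ x₀ y hy] at h7'
        simp only [Int.cast_id] at h7'
        omega
      rw [map_mul, toAdd_mul, Finsupp.add_apply, hpitphi, toAdd_ofAdd, epsA_apply] at h7
      rw [if_neg (Ne.symm hy)] at h7
      omega
    obtain ⟨y₁, hy₁⟩ := exists_ne x₀
    -- the mirrored abelianized relation for σ
    have hmir : ∀ m : N X, pit (σ (φ m))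
        = Multiplicative.ofAdd (epsA x₀ (Multiplicative.toAdd (pit (σ m)))) := by
      intro m
      rw [Rel m, map_mul, map_mul, map_inv, mul_inv_cancel_comm, hpitphi]
    -- eigenvector facts
    have heigA : ∀ y : X, y ≠ x₀ → Multiplicative.toAdd (pit (σ (xb x₀))) y = 0 := by
      intro y hy
      have h8 := hmir (xb x₀)
      rw [hφ₀, map_inv, map_inv] at h8
      have h9 := congrArg (fun f : Multiplicative (X →₀ ℤ) => Multiplicative.toAdd f y) h8
      simp only [toAdd_inv, toAdd_ofAdd, Finsupp.neg_apply, epsA_apply,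
        if_neg (Ne.symm hy)] at h9
      omega
    have heigB : ∀ y : X, y ≠ x₀ → Multiplicative.toAdd (pit (σ (xb y))) x₀ = 0 := by
      intro y hy
      have h8 := hmir (xb y)
      rw [hφ y hy] at h8
      have h9 := congrArg (fun f : Multiplicative (X →₀ ℤ) => Multiplicative.toAdd f x₀) h8
      simp only [toAdd_ofAdd, epsA_apply] at h9
      rw [if_pos trivial] at h9
      omega
    -- find a generator whose image has odd y₁-coordinate
    have hexists : ∃ ys : X, ys ≠ x₀ ∧
        ¬ ((2:ℤ) ∣ Multiplicative.toAdd (pit (σ (xb ys))) y₁) := by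
      by_contra hcon
      push_neg at hcon
      have hxi : ((castM (ZMod 2)).comp ((ev y₁).comp (pit.comp σ.toMonoidHom)))
          = (1 : N X →* Multiplicative (ZMod 2)) := by
        apply homExt
        intro x
        by_cases hx : x = x₀
        · simp only [MonoidHom.comp_apply, MulEquiv.coe_toMonoidHom, MonoidHom.one_apply,
            ev_apply', castM_apply', hx]
          rw [heigA y₁ hy₁]
          simp
        · have hdv := hcon x hx
          simp only [MonoidHom.comp_apply, MulEquiv.coe_toMonoidHom, MonoidHom.one_apply,
            ev_apply', castM_apply']
          rw [(ZMod.intCast_zmod_eq_zero_iff_dvd _ 2).mpr (by exact_mod_cast hdv)]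
          simp
      have h10 := DFunLike.congr_fun hxi (σ.symm (xb y₁))
      simp only [MonoidHom.comp_apply, MulEquiv.coe_toMonoidHom, MonoidHom.one_apply,
        MulEquiv.apply_symm_apply, pit_xb, ev_apply', castM_apply', toAdd_ofAdd,
        Finsupp.single_apply, if_pos rfl] at h10
      exact absurd h10 (by decide)
    obtain ⟨ys, hys, hodd⟩ := hexists
    -- the mod-2 Heisenberg detector is φ-invariant
    have hrho2phi : (rho (ZMod 2) x₀ y₁).comp φ.toMonoidHom = rho (ZMod 2) x₀ y₁ := by
      apply homExt
      intro x
      by_cases hx : x = x₀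
      · rw [hx]
        simp only [MonoidHom.comp_apply, MulEquiv.coe_toMonoidHom, hφ₀, map_inv]
        have hpx : rho (ZMod 2) x₀ y₁ (xb x₀) = Heis.p := by simp [rho, genmap]
        rw [hpx, Heis.inv_def, Heis.p]
        exact congrArg₂ Prod.mk (by decide) (congrArg₂ Prod.mk (by decide) (by decide))
      · simp [hφ x hx]
    -- the commutation relation detected mod 2
    have hrel2 : z * φ (σ (xb ys)) = σ (xb ys) * z := by
      have h := Rel (xb ys)
      rw [hφ ys hys] at h
      conv_rhs => rw [h]
      group
    have h11 : rho (ZMod 2) x₀ y₁ z * rho (ZMod 2) x₀ y₁ (σ (xb ys))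
        = rho (ZMod 2) x₀ y₁ (σ (xb ys)) * rho (ZMod 2) x₀ y₁ z := by
      have h12 := congrArg (rho (ZMod 2) x₀ y₁) hrel2
      rw [map_mul, map_mul] at h12
      have h13 : rho (ZMod 2) x₀ y₁ (φ (σ (xb ys))) = rho (ZMod 2) x₀ y₁ (σ (xb ys)) := by
        simpa using DFunLike.congr_fun hrho2phi (σ (xb ys))
      rw [h13] at h12
      exact h12
    have h14 := congrArg (fun u : Heis (ZMod 2) => u.2.2) h11
    simp only [Heis.mul_trd] at h14
    have hz2 : (rho (ZMod 2) x₀ y₁ z).2.1 = 0 := by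
      rw [rho_snd (ZMod 2) x₀ y₁ hy₁ z, hzy y₁ hy₁]
      simp
    have hg1 : (rho (ZMod 2) x₀ y₁ (σ (xb ys))).1 = 0 := by
      rw [rho_fst, heigB ys hys]
      simp
    have hg2 : (rho (ZMod 2) x₀ y₁ (σ (xb ys))).2.1 = 1 := by
      rw [rho_snd (ZMod 2) x₀ y₁ hy₁]
      have hne : ((Multiplicative.toAdd (pit (σ (xb ys))) y₁ : ℤ) : ZMod 2) ≠ 0 := by
        rw [Ne, ZMod.intCast_zmod_eq_zero_iff_dvd]
        exact_mod_cast hodd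
      have hall : ∀ c : ZMod 2, c ≠ 0 → c = 1 := by decide
      exact hall _ hne
    rw [hz2, hg1, hg2] at h14
    have hz0 : (rho (ZMod 2) x₀ y₁ z).1 = 0 := by linear_combination h14
    rw [rho_fst] at hz0
    have hdvd : (2 : ℤ) ∣ Multiplicative.toAdd (pit z) x₀ := by
      exact_mod_cast (ZMod.intCast_zmod_eq_zero_iff_dvd _ 2).mp hz0
    obtain ⟨mm, hmm⟩ := hdvd
    -- the corrected automorphism
    have hxp : ∀ k : ℤ, pit ((xb x₀) ^ k : N X)
        = Multiplicative.ofAdd (Finsupp.single x₀ k) := by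
      intro k
      rw [map_zpow, pit_xb, ← ofAdd_zsmul]
      congr 1
      rw [Finsupp.smul_single]
      simp
    have hpu : pit ((xb x₀) ^ (-mm) * z * (xb x₀) ^ (-mm)) = 1 := by
      have h15 : Multiplicative.toAdd (pit ((xb x₀) ^ (-mm) * z * (xb x₀) ^ (-mm))) = 0 := by
        have e1 : pit ((xb x₀) ^ (-mm) * z * (xb x₀) ^ (-mm))
            = Multiplicative.ofAdd (Finsupp.single x₀ (-mm))
              * pit z * Multiplicative.ofAdd (Finsupp.single x₀ (-mm)) := by
          rw [map_mul, map_mul, hxp]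
        rw [e1]
        ext t
        simp only [toAdd_mul, toAdd_ofAdd, Finsupp.add_apply, Finsupp.single_apply,
          Finsupp.coe_zero, Pi.zero_apply]
        by_cases ht : x₀ = t
        · rw [if_pos ht, ← ht]
          rw [show Multiplicative.toAdd (pit z) x₀ = 2 * mm from hmm]
          ring
        · rw [if_neg ht, hzy t (fun hh => ht hh.symm)]
          ring
      calc pit ((xb x₀) ^ (-mm) * z * (xb x₀) ^ (-mm))
          = Multiplicative.ofAdd (Multiplicative.toAdd
              (pit ((xb x₀) ^ (-mm) * z * (xb x₀) ^ (-mm)))) := (ofAdd_toAdd _).symm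
        _ = 1 := by rw [h15, ofAdd_zero]
    have hcu := central_of_pit _ hpu
    refine ⟨MulAut.conj ((xb x₀) ^ (-mm)) * σ, ?_, ?_⟩
    · apply MulEquiv.ext
      intro n
      rw [MulAut.mul_apply, MulAut.mul_apply, MulAut.mul_apply, MulAut.mul_apply,
        MulAut.conj_apply, MulAut.conj_apply, Rel n, map_mul, map_mul, map_inv]
      have hφw : φ ((xb x₀) ^ (-mm)) = (xb x₀) ^ mm := by
        rw [map_zpow, hφ₀]
        simp [zpow_neg]
      rw [hφw]
      have hstep : (xb x₀) ^ (-mm) * (z * φ (σ n) * z⁻¹) * ((xb x₀) ^ (-mm))⁻¹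
          = ((xb x₀) ^ (-mm) * z * (xb x₀) ^ (-mm)) *
              ((xb x₀) ^ mm * φ (σ n) * ((xb x₀) ^ mm)⁻¹) *
              ((xb x₀) ^ (-mm) * z * (xb x₀) ^ (-mm))⁻¹ := by
        group
      rw [hstep, hcu, mul_inv_cancel_right]
    · rw [map_mul]
      have hone : hhat (N X) (MulAut.conj ((xb x₀) ^ (-mm))) = 1 :=
        (QuotientGroup.eq_one_iff _).mpr ⟨(xb x₀) ^ (-mm), rfl⟩
      rw [hone, one_mul]
      rfl
  · intro σ h
    rw [← map_mul, h, map_mul]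
end
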